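/- arXiv:2602.13966 — 2 statements merged into one kernel-verified Lean document; each statement's English description precedes it below -/
import Mathlib

section
/- Let W be a Coxeter group with Demazure product ∗. If v = v′s with s a simple reflection and v′ < v in Bruhat order, then for all w ∈ W, v ∗ w = v′ ∗ (s ∗ w). -/
open CoxeterSystem

variable {B W : Type*} [Group W] {M : CoxeterMatrix B}

/-- The Bruhat order on a Coxeter group, via the subword property:
`u ≤ w` iff some reduced word for `w` has a subword whose product is `u`. -/
def BruhatLE (cs : CoxeterSystem M W) (u w : W) : Prop :=
  ∃ l : List B, cs.IsReduced l ∧ cs.wordProd l = w ∧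
    ∃ l' : List B, List.Sublist l' l ∧ cs.wordProd l' = u

/-- `m` is the Demazure product `v ∗ w`: the Bruhat-maximal element of
`{x * q : x ≤ v, q ≤ w}`. -/
def IsDemazureProd (cs : CoxeterSystem M W) (v w m : W) : Prop :=
  (∃ x q : W, BruhatLE cs x v ∧ BruhatLE cs q w ∧ m = x * q) ∧
  (∀ x q : W, BruhatLE cs x v → BruhatLE cs q w → BruhatLE cs (x * q) m)

noncomputable section
namespace BruhatDev
open List

variable {B W : Type*} [Group W] {M : CoxeterMatrix B} (cs : CoxeterSystem M W)

local prefix:100 "s" => cs.simple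
local prefix:100 "π" => cs.wordProd
local prefix:100 "ℓ" => cs.length
local prefix:100 "ris" => cs.rightInvSeq

open Classical in
/-- The reflection representation on `W × ℤˣ` used to prove strong exchange. -/
def eta (i : B) : Equiv.Perm (W × ℤˣ) :=
  Function.Involutive.toPerm
    (fun p => (s i * p.1 * s i, if p.1 = s i then -p.2 else p.2)) (by
      rintro ⟨t, ε⟩
      by_cases h : t = s i
      · simp [h, cs.simple_mul_simple_cancel_left, cs.simple_mul_simple_cancel_right]
      · have h2 : ¬ (s i * t * s i = s i) := by
          intro hc
          apply h
          have := congrArg (fun x => s i * x * s i) hc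
          have h3 : s i = t := by
            simpa [mul_assoc, cs.simple_mul_simple_cancel_left,
              cs.simple_mul_simple_cancel_right] using this.symm
          exact h3.symm
        simp only [h, h2, if_false]
        simp [mul_assoc, cs.simple_mul_simple_cancel_left,
          cs.simple_mul_simple_cancel_right])

open Classical in
theorem eta_apply (i : B) (p : W × ℤˣ) :
    eta cs i p = (s i * p.1 * s i, if p.1 = s i then -p.2 else p.2) := rfl

open Classical in
/-- Composite of the `eta`s along a word, applied to a pair. -/
theorem prodEta_apply (ω : List B) (t : W) (ε : ℤˣ) :
    ((ω.map (eta cs)).prod) (t, ε) =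
      (π ω * t * (π ω)⁻¹, (-1 : ℤˣ) ^ ((ris ω).count t) * ε) := by
  induction ω with
  | nil => simp
  | cons i ω ih =>
    rw [map_cons, prod_cons, Equiv.Perm.mul_apply, ih, eta_apply]
    have hris : ris (i :: ω) = ((π ω)⁻¹ * (s i) * (π ω)) :: ris ω := rfl
    rw [hris]
    have hsw : s i * π ω * t * (s i * π ω)⁻¹ = s i * (π ω * t * (π ω)⁻¹) * s i := by
      rw [mul_inv_rev, cs.inv_simple]; group
    by_cases h : π ω * t * (π ω)⁻¹ = s i
    · have ht : (π ω)⁻¹ * (s i) * (π ω) = t := by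
        rw [← h]; group
      have hcount : (((π ω)⁻¹ * (s i) * (π ω)) :: ris ω).count t = (ris ω).count t + 1 := by
        rw [count_cons, ht]; simp
      rw [hcount]
      simp only [h, cs.wordProd_cons, if_true, Prod.mk.injEq]
      constructor
      · rw [hsw, h]
      · simp [pow_succ, mul_neg, neg_mul]
    · have ht : ¬ ((π ω)⁻¹ * (s i) * (π ω) = t) := by
        intro hc; apply h; rw [← hc]; group
      have hcount : (((π ω)⁻¹ * (s i) * (π ω)) :: ris ω).count t = (ris ω).count t := by
        rw [count_cons]; simp [ht]
      rw [hcount]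
      simp only [h, cs.wordProd_cons, if_false, Prod.mk.injEq]
      constructor
      · rw [hsw]
      · trivial


theorem drop_alternatingWord (i j : B) (k n : ℕ) (h : k ≤ n) :
    (alternatingWord i j n).drop k = alternatingWord i j (n - k) := by
  induction k with
  | zero => simp
  | succ k ih =>
    have hk : k ≤ n := Nat.le_of_succ_le h
    obtain ⟨q, hq⟩ : ∃ q, n - k = q + 1 := ⟨n - k - 1, by omega⟩
    have hdd : (alternatingWord i j n).drop (k+1) = ((alternatingWord i j n).drop k).drop 1 := by
      rw [List.drop_drop, Nat.add_comm]
    have hq3 : n - (k+1) = q := by omega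
    rw [hdd, ih hk, hq, alternatingWord_succ', hq3]
    simp

theorem getD_alternatingWord (i j : B) (n k : ℕ) (h : k < n) (d : B) :
    (alternatingWord i j n).getD k d = if Even (n - k) then i else j := by
  have h1 : (alternatingWord i j n).getD k d
      = ((alternatingWord i j n).drop k).getD 0 d := by
    rw [List.getD_eq_getElem?_getD, List.getD_eq_getElem?_getD,
      List.getElem?_drop, Nat.add_zero]
  obtain ⟨q, hq⟩ : ∃ q, n - k = q + 1 := ⟨n - k - 1, by omega⟩
  rw [h1, drop_alternatingWord i j k n (le_of_lt h), hq, alternatingWord_succ']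
  have hpar : Even (q + 1) ↔ ¬ Even q := Nat.even_add_one
  by_cases hq2 : Even q <;> simp [hq2, hpar]

/-- Decomposition of a long alternating word. -/
theorem alternatingWord_add (i j : B) (q m : ℕ) :
    alternatingWord i j (q + m) =
      (if Even q then alternatingWord i j m else alternatingWord j i m)
        ++ alternatingWord i j q := by
  induction q with
  | zero => simp [alternatingWord]
  | succ q ih =>
    have key : ∀ a b : B, (if Even m then b else a) :: alternatingWord a b m
        = alternatingWord b a m ++ [b] := by
      intro a b
      rw [← alternatingWord_succ' a b m, alternatingWord_succ a b m]
      simp [List.concat_eq_append]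
    have hl : q + 1 + m = (q + m) + 1 := by omega
    rw [hl, alternatingWord_succ' i j (q+m), ih, alternatingWord_succ' i j q]
    by_cases hq : Even q
    · have hq1 : ¬ Even (q + 1) := by simp [Nat.even_add_one, hq]
      have hqm : Even (q + m) ↔ Even m := by
        rw [Nat.even_add]; tauto
      simp only [hq, if_true, hq1, if_false]
      have hc : (if Even (q+m) then j else i) = (if Even m then j else i) := by
        simp only [hqm]
      rw [hc, ← List.cons_append, key i j, List.append_assoc]
      simp
    · have hq1 : Even (q + 1) := Nat.even_add_one.mpr hq
      have hqm : Even (q + m) ↔ ¬ Even m := by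
        rw [Nat.even_add]; tauto
      simp only [hq, if_false, hq1, if_true]
      have hc : (if Even (q+m) then j else i) = (if Even m then i else j) := by
        by_cases hm : Even m <;> simp [hqm, hm]
      rw [hc, ← List.cons_append, key j i, List.append_assoc]
      simp

/-- The elements of the right inversion sequence of an alternating word. -/
theorem getD_ris_alternatingWord (i j : B) (n k : ℕ) (h : k < n) :
    (ris (alternatingWord i j n)).getD k 1 =
      (π (alternatingWord i j (n - 1 - k)))⁻¹
        * (if Even (n - k) then s i else s j)
        * π (alternatingWord i j (n - 1 - k)) := by
  rw [cs.getD_rightInvSeq]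
  have hd : (alternatingWord i j n).drop (k + 1) = alternatingWord i j (n - 1 - k) := by
    rw [drop_alternatingWord i j (k+1) n (by omega)]
    congr 1
    omega
  have hg : (alternatingWord i j n)[k]? = some ((alternatingWord i j n).getD k i) := by
    rw [List.getD_eq_getElem?_getD]
    have : k < (alternatingWord i j n).length := by
      rw [length_alternatingWord]; exact h
    rw [List.getElem?_eq_getElem this]
    simp
  rw [hd, hg, getD_alternatingWord i j n k h]
  by_cases hp : Even (n - k) <;> simp [hp]

/-- Pairing: the inversion-sequence-entry function is `m`-periodic for the
`(i,j)`-alternating words, where `m = M i j`. -/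
theorem rho_periodic (i j : B) (q : ℕ) :
    (π (alternatingWord i j (q + M i j)))⁻¹
        * (if Even (q + M i j) then s j else s i)
        * π (alternatingWord i j (q + M i j))
      = (π (alternatingWord i j q))⁻¹
        * (if Even q then s j else s i)
        * π (alternatingWord i j q) := by
  set m := M i j with hm
  have hMsymm : M j i = m := M.symmetric j i
  -- dihedral key claim
  have claim : ∀ a b : B, M a b = m →
      (if Even m then s b else s a) * π (alternatingWord a b m)
        = π (alternatingWord a b m) * s b := by
    intro a b hab
    have h1 : (if Even m then s b else s a) * π (alternatingWord a b m)
        = π (alternatingWord a b (m + 1)) := by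
      rw [alternatingWord_succ' a b m, cs.wordProd_cons]
      by_cases hp : Even m <;> simp [hp]
    have h2 : π (alternatingWord a b (m + 1)) = π (alternatingWord b a m) * s b := by
      rw [alternatingWord_succ a b m]
      rw [List.concat_eq_append, cs.wordProd_append]
      simp
    have h3 : π (alternatingWord b a m) = π (alternatingWord a b m) := by
      have hba : M b a = m := by rw [← hab]; exact M.symmetric b a
      have hx := cs.wordProd_braidWord_eq b a
      unfold CoxeterSystem.braidWord at hx
      rwa [hba, hab] at hx
    rw [h1, h2, h3]
  -- decompose the long word
  rw [alternatingWord_add i j q m, cs.wordProd_append]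
  by_cases hq : Even q
  · have hqm : Even (q + m) ↔ Even m := by rw [Nat.even_add]; tauto
    simp only [hq, if_true]
    have hc : (if Even (q + m) then s j else s i) = (if Even m then s j else s i) := by
      by_cases hp : Even m <;> simp [hqm, hp]
    rw [hc]
    have hmid : (π (alternatingWord i j m))⁻¹ * (if Even m then s j else s i)
        * π (alternatingWord i j m) = s j := by
      rw [mul_assoc, claim i j hm.symm, ← mul_assoc, inv_mul_cancel, one_mul]
    have hgrp : (π (alternatingWord i j m) * π (alternatingWord i j q))⁻¹
        * (if Even m then s j else s i)
        * (π (alternatingWord i j m) * π (alternatingWord i j q))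
        = (π (alternatingWord i j q))⁻¹
          * ((π (alternatingWord i j m))⁻¹ * (if Even m then s j else s i)
              * π (alternatingWord i j m))
          * π (alternatingWord i j q) := by group
    rw [hgrp, hmid]
  · have hqm : Even (q + m) ↔ ¬ Even m := by rw [Nat.even_add]; tauto
    simp only [hq, if_false]
    have hc : (if Even (q + m) then s j else s i) = (if Even m then s i else s j) := by
      by_cases hp : Even m <;> simp [hqm, hp]
    rw [hc]
    have hmid : (π (alternatingWord j i m))⁻¹ * (if Even m then s i else s j)
        * π (alternatingWord j i m) = s i := by
      rw [mul_assoc, claim j i (by rw [hMsymm]), ← mul_assoc, inv_mul_cancel, one_mul]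
    have hgrp : (π (alternatingWord j i m) * π (alternatingWord i j q))⁻¹
        * (if Even m then s i else s j)
        * (π (alternatingWord j i m) * π (alternatingWord i j q))
        = (π (alternatingWord i j q))⁻¹
          * ((π (alternatingWord j i m))⁻¹ * (if Even m then s i else s j)
              * π (alternatingWord j i m))
          * π (alternatingWord i j q) := by group
    rw [hgrp, hmid]

theorem getD_ris_alt_rho (i j : B) (n k : ℕ) (h : k < n) :
    (ris (alternatingWord i j n)).getD k 1 =
      (π (alternatingWord i j (n - 1 - k)))⁻¹
        * (if Even (n - 1 - k) then s j else s i)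
        * π (alternatingWord i j (n - 1 - k)) := by
  rw [getD_ris_alternatingWord cs i j n k h]
  have he : n - k = (n - 1 - k) + 1 := by omega
  have hiff : Even (n - k) ↔ ¬ Even (n - 1 - k) := by rw [he, Nat.even_add_one]
  by_cases hp : Even (n-1-k) <;> simp [hiff, hp]

theorem ris_alt_double (i j : B) :
    ris (alternatingWord i j (2 * M i j)) =
      ris (alternatingWord i j (M i j)) ++ ris (alternatingWord i j (M i j)) := by
  set m := M i j with hm
  apply List.ext_getElem
  · simp only [length_rightInvSeq, length_alternatingWord, List.length_append]
    omega
  · intro k h1 h2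
    have hk : k < 2 * m := by
      simpa only [length_rightInvSeq, length_alternatingWord] using h1
    rw [← List.getD_eq_getElem _ 1 h1]
    rw [getD_ris_alt_rho cs i j (2*m) k hk]
    by_cases hkm : k < m
    · have hl : k < (ris (alternatingWord i j m)).length := by
        simpa only [length_rightInvSeq, length_alternatingWord] using hkm
      rw [List.getElem_append_left hl]
      rw [← List.getD_eq_getElem _ 1 hl]
      rw [getD_ris_alt_rho cs i j m k hkm]
      have harith : 2*m - 1 - k = (m - 1 - k) + m := by omega
      rw [harith]
      exact rho_periodic cs i j (m - 1 - k)
    · have hge : (ris (alternatingWord i j m)).length ≤ k := by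
        simp only [length_rightInvSeq, length_alternatingWord]; omega
      rw [List.getElem_append_right hge]
      have hlt : k - (ris (alternatingWord i j m)).length
          < (ris (alternatingWord i j m)).length := by
        simp only [length_rightInvSeq, length_alternatingWord]; omega
      rw [← List.getD_eq_getElem _ 1 hlt]
      have hlen : (ris (alternatingWord i j m)).length = m := by
        simp only [length_rightInvSeq, length_alternatingWord]
      rw [hlen] at hlt ⊢
      rw [getD_ris_alt_rho cs i j m (k - m) hlt]
      have harith : 2*m - 1 - k = m - 1 - (k - m) := by omega
      rw [harith]

open Classical in
theorem count_ris_alt_even (i j : B) (t : W) :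
    Even ((ris (alternatingWord i j (2 * M i j))).count t) := by
  rw [ris_alt_double]
  rw [List.count_append]
  exact Even.add_self _

theorem alternatingWord_two_mul_succ (i j : B) (n : ℕ) :
    alternatingWord i j (2*(n+1)) = i :: j :: alternatingWord i j (2*n) := by
  have h1 : 2*(n+1) = (2*n+1)+1 := by ring
  rw [h1, alternatingWord_succ', alternatingWord_succ']
  have h2 : ¬ Even (2*n+1) := by simp [Nat.even_add_one]
  have h3 : Even (2*n) := even_two_mul n
  simp [h2, h3]

theorem prodEta_alt (i j : B) (n : ℕ) :
    ((alternatingWord i j (2*n)).map (eta cs)).prod = ((eta cs i) * (eta cs j))^n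
    ∧ π (alternatingWord i j (2*n)) = (s i * s j)^n := by
  induction n with
  | zero => simp [alternatingWord]
  | succ n ih =>
    rw [alternatingWord_two_mul_succ]
    constructor
    · rw [List.map_cons, List.map_cons, List.prod_cons, List.prod_cons, ih.1,
        pow_succ', mul_assoc]
    · rw [cs.wordProd_cons, cs.wordProd_cons, ih.2, pow_succ', mul_assoc]

open Classical in
theorem eta_liftable : M.IsLiftable (eta cs) := by
  intro i j
  apply Equiv.ext
  rintro ⟨t, ε⟩
  rw [← (prodEta_alt cs i j (M i j)).1, prodEta_apply]
  have h1 : π (alternatingWord i j (2 * M i j)) = 1 := by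
    rw [(prodEta_alt cs i j (M i j)).2]
    exact cs.simple_mul_simple_pow i j
  have h2 : ((-1 : ℤˣ)) ^ ((ris (alternatingWord i j (2 * M i j))).count t) = 1 :=
    (count_ris_alt_even cs i j t).neg_one_pow
  rw [h1, h2]
  simp

/-- The homomorphism realizing the reflection representation. -/
def phi : W →* Equiv.Perm (W × ℤˣ) := cs.lift ⟨eta cs, eta_liftable cs⟩

theorem phi_simple (i : B) : phi cs (s i) = eta cs i :=
  cs.lift_apply_simple (eta_liftable cs) i

theorem phi_wordProd (ω : List B) : phi cs (π ω) = (ω.map (eta cs)).prod := by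
  induction ω with
  | nil => simp [cs.wordProd_nil]
  | cons i ω ih =>
    rw [cs.wordProd_cons, map_mul, phi_simple, List.map_cons, List.prod_cons, ih]

open Classical in
theorem phi_apply (ω : List B) (t : W) (ε : ℤˣ) :
    phi cs (π ω) (t, ε) =
      (π ω * t * (π ω)⁻¹, (-1 : ℤˣ) ^ ((ris ω).count t) * ε) := by
  rw [phi_wordProd, prodEta_apply]

/-- The sign of `t` at `w`. -/
def flag (w t : W) : ℤˣ := ((phi cs w) (t, 1)).2

open Classical in
theorem flag_eq (ω : List B) (t : W) :
    flag cs (π ω) t = (-1:ℤˣ)^((ris ω).count t) := by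
  unfold flag
  rw [phi_apply]
  simp

theorem phi_snd (w t : W) (ε : ℤˣ) : ((phi cs w) (t, ε)).2 = flag cs w t * ε := by
  classical
  obtain ⟨ω, hω⟩ := cs.wordProd_surjective w
  subst hω
  rw [phi_apply, flag_eq]

theorem phi_fst (w t : W) (ε : ℤˣ) : ((phi cs w) (t, ε)).1 = w * t * w⁻¹ := by
  obtain ⟨ω, hω⟩ := cs.wordProd_surjective w
  subst hω
  rw [phi_apply]

theorem phi_pair (w t : W) (ε : ℤˣ) :
    (phi cs w) (t, ε) = (w * t * w⁻¹, flag cs w t * ε) := by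
  rw [← phi_fst cs w t ε, ← phi_snd cs w t ε]

open Classical in
theorem flag_simple (j : B) (t : W) :
    flag cs (s j) t = if t = s j then -1 else 1 := by
  unfold flag
  rw [phi_simple, eta_apply]

theorem flag_mul (a b t : W) :
    flag cs (a * b) t = flag cs b t * flag cs a (b * t * b⁻¹) := by
  have h0 : flag cs (a * b) t = ((phi cs (a*b)) (t,1)).2 := rfl
  rw [h0, map_mul, Equiv.Perm.mul_apply, phi_pair cs b t 1, phi_snd]
  simp [mul_comm]

open Classical in
theorem odd_count_iff_flag (ω : List B) (t : W) :
    Odd ((ris ω).count t) ↔ flag cs (π ω) t = -1 := by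
  rw [flag_eq]
  constructor
  · exact fun h => h.neg_one_pow
  · intro h
    by_contra hodd
    rw [Nat.not_odd_iff_even] at hodd
    rw [hodd.neg_one_pow] at h
    exact (by decide : (1 : ℤˣ) ≠ -1) h

theorem flag_self (t : W) (ht : cs.IsReflection t) : flag cs t t = -1 := by
  classical
  obtain ⟨v, i, rfl⟩ := ht
  obtain ⟨ω, hω⟩ := cs.wordProd_surjective v
  subst hω
  induction ω with
  | nil =>
    simp only [cs.wordProd_nil, one_mul, inv_one, mul_one]
    rw [flag_simple]
    simp
  | cons j ω ih =>
    set t' := π ω * s i * (π ω)⁻¹ with ht'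
    have hw : π (j :: ω) * s i * (π (j :: ω))⁻¹ = s j * t' * s j := by
      rw [cs.wordProd_cons, ht', mul_inv_rev, cs.inv_simple]
      group
    rw [hw]
    set e : ℤˣ := if t' = s j then -1 else 1 with he
    have hone : flag cs (s j) (s j * t' * s j) = e := by
      rw [flag_simple]
      by_cases hc : t' = s j
      · rw [if_pos (by rw [hc, cs.simple_mul_simple_cancel_right]), he, if_pos hc]
      · rw [if_neg, he, if_neg hc]
        intro hx
        apply hc
        have := congrArg (fun x => s j * x * s j) hx
        simpa [mul_assoc, cs.simple_mul_simple_cancel_left,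
          cs.simple_mul_simple_cancel_right] using this
    have hconj : s j * (s j * t' * s j) * (s j)⁻¹ = t' := by
      have h9 : s j * (s j * t' * s j) * (s j)⁻¹
          = (s j * s j) * t' * (s j * (s j)⁻¹) := by group
      rw [h9, cs.simple_mul_simple_self, mul_inv_cancel]
      simp
    have hconj2 : t' * t' * t'⁻¹ = t' := by group
    rw [flag_mul cs (s j * t') (s j), flag_mul cs (s j) t', hone, hconj, hconj2, ih, he]
    by_cases hc : t' = s j <;> simp [hc, flag_simple cs]

theorem isRightInversion_iff_flag (w t : W) (ht : cs.IsReflection t) :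
    cs.IsRightInversion w t ↔ flag cs w t = -1 := by
  classical
  constructor
  · intro hinv
    rcases Int.units_eq_one_or (flag cs w t) with h1 | h1
    · exfalso
      have hflagwt : flag cs (w * t) t = -1 := by
        have hmm : t * t * t⁻¹ = t := by group
        rw [flag_mul, hmm, flag_self cs t ht, h1]
        simp
      -- then t is a right inversion of w * t
      obtain ⟨ω, hred, hω⟩ := cs.exists_reduced_word' (w * t)
      rw [hω] at hflagwt
      have hodd := (odd_count_iff_flag cs ω t).mpr hflagwt
      have hmem : t ∈ ris ω := by
        rw [← List.count_pos_iff]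
        rcases hodd with ⟨c, hc⟩
        omega
      have hinv2 := cs.isRightInversion_of_mem_rightInvSeq hred hmem
      rw [← hω] at hinv2
      have h2 := hinv2.2
      rw [mul_assoc, ht.mul_self, mul_one] at h2
      exact Nat.lt_asymm hinv.2 h2
    · exact h1
  · intro h1
    obtain ⟨ω, hred, hω⟩ := cs.exists_reduced_word' w
    rw [hω] at h1
    have hodd := (odd_count_iff_flag cs ω t).mpr h1
    have hmem : t ∈ ris ω := by
      rw [← List.count_pos_iff]
      rcases hodd with ⟨c, hc⟩
      omega
    have := cs.isRightInversion_of_mem_rightInvSeq hred hmem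
    rwa [← hω] at this

theorem strong_exchange (ω : List B) (t : W) (ht : cs.IsReflection t)
    (hl : ℓ (π ω * t) < ℓ (π ω)) :
    ∃ k, k < ω.length ∧ π ω * t = π (ω.eraseIdx k) ∧ t = (ris ω).getD k 1 := by
  classical
  have hflag : flag cs (π ω) t = -1 := (isRightInversion_iff_flag cs _ t ht).mp ⟨ht, hl⟩
  have hodd := (odd_count_iff_flag cs ω t).mpr hflag
  have hmem : t ∈ ris ω := by
    rw [← List.count_pos_iff]
    rcases hodd with ⟨c, hc⟩
    omega
  obtain ⟨k, hk, hgetelem⟩ := List.getElem_of_mem hmem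
  have hk' : k < ω.length := by
    rwa [cs.length_rightInvSeq] at hk
  have hget : t = (ris ω).getD k 1 := by
    rw [List.getD_eq_getElem _ 1 hk, hgetelem]
  refine ⟨k, hk', ?_, hget⟩
  rw [hget]
  exact cs.wordProd_mul_getD_rightInvSeq ω k

theorem reduced_of_all_up (ω : List B)
    (h : ∀ j, j < ω.length → ℓ (π (ω.take (j+1))) = ℓ (π (ω.take j)) + 1) :
    cs.IsReduced ω := by
  have key : ∀ n, n ≤ ω.length → ℓ (π (ω.take n)) = n := by
    intro n
    induction n with
    | zero => intro _; simp
    | succ n ih =>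
      intro hn
      rw [h n (by omega), ih (by omega)]
  have := key ω.length (le_refl _)
  rw [List.take_length] at this
  exact this

theorem deletion_prop : ∀ n (ω : List B), ω.length ≤ n →
    ∃ χ, χ.Sublist ω ∧ cs.IsReduced χ ∧ π χ = π ω := by
  intro n
  induction n with
  | zero =>
    intro ω hω
    rw [Nat.le_zero, List.length_eq_zero_iff] at hω
    subst hω
    exact ⟨[], List.Sublist.refl _, by simp [CoxeterSystem.IsReduced], rfl⟩
  | succ n ih =>
    intro ω hω
    by_cases hred : cs.IsReduced ω
    · exact ⟨ω, List.Sublist.refl _, hred, rfl⟩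
    · -- find a descent step
      have hex : ∃ j, j < ω.length ∧ ¬ (ℓ (π (ω.take (j+1))) = ℓ (π (ω.take j)) + 1) := by
        by_contra hc
        push_neg at hc
        exact hred (reduced_of_all_up cs ω hc)
      obtain ⟨j, hj, hne⟩ := hex
      have htake : ω.take (j+1) = ω.take j ++ [ω[j]] := by
        rw [List.take_succ, List.getElem?_eq_getElem hj]
        rfl
      have hprod : π (ω.take (j+1)) = π (ω.take j) * s (ω[j]) := by
        rw [htake, cs.wordProd_append]
        simp
      have hdown : ℓ (π (ω.take j) * s (ω[j])) < ℓ (π (ω.take j)) := by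
        rcases cs.length_mul_simple (π (ω.take j)) (ω[j]) with hup | hdn
        · exfalso
          apply hne
          rw [hprod, hup]
        · have hne2 := cs.length_mul_simple_ne (π (ω.take j)) (ω[j])
          omega
      obtain ⟨k, hk, herase, -⟩ := strong_exchange cs (ω.take j) (s (ω[j]))
        (cs.isReflection_simple (ω[j])) hdown
      -- the shorter word
      set χ₁ : List B := (ω.take j).eraseIdx k ++ ω.drop (j+1) with hχ₁
      have hsub : χ₁.Sublist ω := by
        have h1 : ((ω.take j).eraseIdx k).Sublist (ω.take j) := List.eraseIdx_sublist _ _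
        have h2 : (ω.drop (j+1)).Sublist (ω.drop j) := by
          rw [List.drop_eq_getElem_cons hj]
          exact List.sublist_cons_self _ _
        have := List.Sublist.append h1 h2
        rwa [List.take_append_drop j ω] at this
      have hprodeq : π χ₁ = π ω := by
        rw [hχ₁, cs.wordProd_append, ← herase]
        conv_rhs => rw [← List.take_append_drop j ω]
        rw [cs.wordProd_append, List.drop_eq_getElem_cons hj, cs.wordProd_cons]
        group
      have hlen : χ₁.length ≤ n := by
        have h1 : ((ω.take j).eraseIdx k).length = j - 1 := by
          rw [List.length_eraseIdx]
          have : (ω.take j).length = j := by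
            rw [List.length_take]
            omega
          rw [this]
          simp [hk, this] at *
          omega
        have h2 : (ω.drop (j+1)).length = ω.length - (j+1) := by
          rw [List.length_drop]
        rw [hχ₁, List.length_append, h1, h2]
        have hkj : k < j := by
          have : (ω.take j).length = j := by rw [List.length_take]; omega
          rwa [this] at hk
        omega
      obtain ⟨χ, hs, hr, hp⟩ := ih χ₁ hlen
      exact ⟨χ, hs.trans hsub, hr, by rw [hp, hprodeq]⟩

theorem deletion (ω : List B) : ∃ χ, χ.Sublist ω ∧ cs.IsReduced χ ∧ π χ = π ω :=
  deletion_prop cs ω.length ω (le_refl _)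

/-- One step in the Bruhat chain order. -/
def bstep (x y : W) : Prop := ∃ t, cs.IsReflection t ∧ y = x * t ∧ ℓ x < ℓ y

/-- Chain version of the Bruhat order. -/
def lec (x y : W) : Prop := Relation.ReflTransGen (bstep cs) x y

theorem chain_subword {u w : W} (h : lec cs u w) :
    ∀ ω, cs.IsReduced ω → π ω = w → ∃ χ, χ.Sublist ω ∧ π χ = u := by
  induction h with
  | refl => exact fun ω _ hω => ⟨ω, List.Sublist.refl _, hω⟩
  | tail hab hbc ih =>
    rename_i b c
    intro ω hred hω
    obtain ⟨t, ht, hc, hlt⟩ := hbc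
    have hlen : ℓ (π ω * t) < ℓ (π ω) := by
      rw [hω, hc, mul_assoc, ht.mul_self, mul_one]
      rwa [hc] at hlt
    obtain ⟨k, hk, herase, -⟩ := strong_exchange cs ω t ht hlen
    have hb : π (ω.eraseIdx k) = b := by
      rw [← herase, hω, hc, mul_assoc, ht.mul_self, mul_one]
    obtain ⟨χ₁, hχ₁sub, hχ₁red, hχ₁prod⟩ := deletion cs (ω.eraseIdx k)
    obtain ⟨χ, hχsub, hχprod⟩ := ih χ₁ hχ₁red (by rw [hχ₁prod, hb])
    exact ⟨χ, hχsub.trans (hχ₁sub.trans (List.eraseIdx_sublist _ _)), hχprod⟩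

theorem sublist_decomp {χ α : List B} (h : χ.Sublist α) (hne : χ ≠ α) :
    ∃ (a b a' : List B) (c : B), α = a ++ c :: b ∧ χ = a' ++ b ∧ a'.Sublist a := by
  induction h with
  | slnil => exact absurd rfl hne
  | @cons l₁ l₂ c h ih =>
    by_cases hc : l₁ = l₂
    · exact ⟨[], l₂, [], c, by simp, by simp [hc], by simp⟩
    · obtain ⟨a, b, a', d, h1, h2, h3⟩ := ih hc
      exact ⟨c :: a, b, a', d, by simp [h1], h2,
        h3.trans (List.sublist_cons_self c a)⟩
  | @cons_cons l₁ l₂ c h ih =>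
    by_cases hc : l₁ = l₂
    · exact absurd (by rw [hc]) hne
    · obtain ⟨a, b, a', d, h1, h2, h3⟩ := ih hc
      exact ⟨c :: a, b, c :: a', d, by simp [h1], by simp [h2], h3.cons₂ c⟩

private theorem B2 : ∀ d n (a₁ bb a₁' : List B) (c : B),
    cs.IsReduced (a₁ ++ c :: bb) → a₁'.Sublist a₁ →
    a₁.length - a₁'.length + 1 = d → a₁.length = n →
    lec cs (π (a₁' ++ bb)) (π (a₁ ++ c :: bb)) := by
  intro d
  induction d using Nat.strong_induction_on with
  | _ d ihd =>
  intro n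
  induction n using Nat.strong_induction_on with
  | _ n ihn =>
  intro a₁ bb a₁' c hred hsub hd hn
  have hlu : a₁'.length ≤ a₁.length := hsub.length_le
  set t : W := (π bb)⁻¹ * s c * π bb with htdef
  have ht : cs.IsReflection t := ⟨(π bb)⁻¹, c, by rw [inv_inv]⟩
  set u : W := π (a₁' ++ bb) with hu
  have hut : u * t = π (a₁' ++ c :: bb) := by
    rw [hu, htdef, cs.wordProd_append, cs.wordProd_append, cs.wordProd_cons]
    group
  rcases Nat.lt_or_ge (ℓ u) (ℓ (u * t)) with hup | hge
  · -- length goes up: step to `u * t` and recurse with smaller deficiency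
    have hstep : bstep cs u (u * t) := ⟨t, ht, rfl, hup⟩
    by_cases heq : a₁' = a₁
    · have h2 : π (a₁ ++ c :: bb) = u * t := by rw [← heq, ← hut]
      rw [h2]
      exact Relation.ReflTransGen.single hstep
    · obtain ⟨a, b, a', c', hα, hχ, hsub'⟩ := sublist_decomp hsub heq
      have hlen1 : a₁.length = a.length + 1 + b.length := by
        rw [hα]; simp; omega
      have hlen2 : a₁'.length = a'.length + b.length := by rw [hχ]; simp
      have hlena : a'.length ≤ a.length := hsub'.length_le
      have hlta : a₁'.length < a₁.length := by
        rcases Nat.lt_or_ge a₁'.length a₁.length with h | h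
        · exact h
        · exact absurd (hsub.eq_of_length (by omega)) heq
      have hω : a₁ ++ c :: bb = a ++ c' :: (b ++ c :: bb) := by rw [hα]; simp
      have hred' : cs.IsReduced (a ++ c' :: (b ++ c :: bb)) := by rw [← hω]; exact hred
      have happ : a₁' ++ c :: bb = a' ++ (b ++ c :: bb) := by rw [hχ]; simp
      have hres := ihd (d-1) (by omega) (a.length) a (b ++ c :: bb) a' c'
        hred' hsub' (by omega) rfl
      rw [← happ, ← hω, ← hut] at hres
      exact Relation.ReflTransGen.head hstep hres
  · -- length goes down: exchange
    have hdn : ℓ (u * t) < ℓ u :=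
      lt_of_le_of_ne hge (ht.length_mul_left_ne u)
    obtain ⟨k, hk, herase, hgetd⟩ := strong_exchange cs (a₁' ++ bb) t ht hdn
    rw [List.length_append] at hk
    by_cases hklt : k < a₁'.length
    · -- erase inside a₁' : same-product subword using `c`, recurse with smaller n
      have herase2 : (a₁' ++ bb).eraseIdx k = a₁'.eraseIdx k ++ bb :=
        List.eraseIdx_append_of_lt_length hklt bb
      have hunew : π ((a₁'.eraseIdx k) ++ c :: bb) = u := by
        have h1 : u = (u * t) * t := by rw [mul_assoc, ht.mul_self, mul_one]
        rw [h1, herase, herase2, htdef]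
        rw [cs.wordProd_append, cs.wordProd_append, cs.wordProd_cons]
        group
      set δ : List B := a₁'.eraseIdx k with hδ
      have hδsub : δ.Sublist a₁ := (List.eraseIdx_sublist _ _).trans hsub
      have hδlen : δ.length = a₁'.length - 1 := by
        rw [hδ, List.length_eraseIdx]
        simp [hklt]
      have hδne : δ ≠ a₁ := by
        intro hcon
        have := congrArg List.length hcon
        omega
      obtain ⟨a, b, a', c', hα, hχ, hsub'⟩ := sublist_decomp hδsub hδne
      have hlen1 : a₁.length = a.length + 1 + b.length := by
        rw [hα]; simp; omega
      have hlen2 : δ.length = a'.length + b.length := by rw [hχ]; simp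
      have hlena : a'.length ≤ a.length := hsub'.length_le
      have hω : a₁ ++ c :: bb = a ++ c' :: (b ++ c :: bb) := by rw [hα]; simp
      have hred' : cs.IsReduced (a ++ c' :: (b ++ c :: bb)) := by rw [← hω]; exact hred
      have happ : δ ++ c :: bb = a' ++ (b ++ c :: bb) := by rw [hχ]; simp
      have hres := ihn (a.length) (by omega) a (b ++ c :: bb) a' c'
        hred' hsub' (by omega) rfl
      rw [← happ, ← hω, hunew] at hres
      exact hres
    · -- erase inside bb : contradiction with reducedness
      exfalso
      push_neg at hklt
      set k2 := k - a₁'.length with hk2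
      have hk2lt : k2 < bb.length := by omega
      have hdrop : (a₁' ++ bb).drop (k+1) = bb.drop (k2+1) := by
        have hsplit : k + 1 = a₁'.length + (k2 + 1) := by omega
        rw [hsplit, List.drop_append]
        simp
      have hget : (a₁' ++ bb)[k]? = bb[k2]? := by
        rw [List.getElem?_append_right hklt]
      set g : W := π (bb.take k2) with hg
      set x : W := s (bb[k2]) with hx
      set dw : W := π (bb.drop (k2+1)) with hdw
      have hBb : bb = bb.take k2 ++ bb[k2] :: bb.drop (k2+1) := by
        conv_lhs => rw [← List.take_append_drop k2 bb]
        rw [List.drop_eq_getElem_cons hk2lt]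
      have hπbb : π bb = g * (x * dw) := by
        conv_lhs => rw [hBb]
        rw [cs.wordProd_append, cs.wordProd_cons]
      have ht2 : t = dw⁻¹ * x * dw := by
        rw [hgetd, cs.getD_rightInvSeq, hdrop, hget]
        rw [List.getElem?_eq_getElem hk2lt]
        simp
        rfl
      have hsc : s c = g * x * g⁻¹ := by
        have h1 : π bb * t * (π bb)⁻¹ = s c := by rw [htdef]; group
        rw [← h1, ht2, hπbb]
        have h2 : g * (x * dw) * (dw⁻¹ * x * dw) * (g * (x * dw))⁻¹
            = g * ((x * x) * x⁻¹) * g⁻¹ := by group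
        rw [h2, hx, cs.simple_mul_simple_self, one_mul, cs.inv_simple]
      have hkey : s c * g = g * x := by rw [hsc]; group
      have hcbb : π (c :: bb) = π (bb.take k2 ++ bb.drop (k2+1)) := by
        rw [cs.wordProd_cons, hπbb, cs.wordProd_append]
        have h7 : s c * (g * (x * dw)) = (s c * g) * x * dw := by group
        rw [h7, hkey]
        have h8 : g * x * x * dw = g * (x * x) * dw := by group
        rw [h8, hx, cs.simple_mul_simple_self, mul_one]
      have hωrw : π (a₁ ++ c :: bb) = π (a₁ ++ (bb.take k2 ++ bb.drop (k2+1))) := by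
        rw [cs.wordProd_append, cs.wordProd_append, hcbb]
      have hlenle := cs.length_wordProd_le (a₁ ++ (bb.take k2 ++ bb.drop (k2+1)))
      rw [← hωrw] at hlenle
      have hredlen : ℓ (π (a₁ ++ c :: bb)) = (a₁ ++ c :: bb).length := hred
      rw [hredlen] at hlenle
      simp only [List.length_append, List.length_cons, List.length_take,
        List.length_drop] at hlenle
      omega

theorem subword_chain {ω χ : List B} (hred : cs.IsReduced ω) (hsub : χ.Sublist ω) :
    lec cs (π χ) (π ω) := by
  by_cases heq : χ = ω
  · rw [heq]
    exact Relation.ReflTransGen.refl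
  · obtain ⟨a, b, a', c, hα, hχ, hsub'⟩ := sublist_decomp hsub heq
    rw [hα, hχ]
    exact B2 cs (a.length - a'.length + 1) a.length a b a' c (by rw [← hα]; exact hred)
      hsub' rfl rfl

/-! ### Bridge to `BruhatLE` -/

theorem bruhat_refl (w : W) : BruhatLE cs w w := by
  obtain ⟨ω, hred, hw⟩ := cs.exists_reduced_word' w
  exact ⟨ω, hred, hw.symm, ω, List.Sublist.refl _, hw.symm⟩

theorem bruhat_one (w : W) : BruhatLE cs 1 w := by
  obtain ⟨ω, hred, hw⟩ := cs.exists_reduced_word' w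
  exact ⟨ω, hred, hw.symm, [], List.nil_sublist _, cs.wordProd_nil⟩

theorem bruhat_length_le {u w : W} (h : BruhatLE cs u w) : ℓ u ≤ ℓ w := by
  obtain ⟨l, hred, hπ, l', hsub, hu⟩ := h
  calc ℓ u ≤ l'.length := by rw [← hu]; exact cs.length_wordProd_le l'
    _ ≤ l.length := hsub.length_le
    _ = ℓ w := by rw [← hπ]; exact hred.symm

theorem bruhat_eq_of_length {u w : W} (h : BruhatLE cs u w) (hl : ℓ u = ℓ w) : u = w := by
  obtain ⟨l, hred, hπ, l', hsub, hu⟩ := h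
  have h1 : ℓ u ≤ l'.length := by rw [← hu]; exact cs.length_wordProd_le l'
  have h2 : l'.length ≤ l.length := hsub.length_le
  have h3 : l.length = ℓ w := by rw [← hπ]; exact hred.symm
  have h4 : l' = l := hsub.eq_of_length (by omega)
  rw [← hu, ← hπ, h4]

theorem bruhat_antisymm {u w : W} (h1 : BruhatLE cs u w) (h2 : BruhatLE cs w u) : u = w :=
  bruhat_eq_of_length cs h1 (Nat.le_antisymm (bruhat_length_le cs h1) (bruhat_length_le cs h2))

/-- The subword property holds for every reduced word. -/
theorem bruhat_all {u w : W} (h : BruhatLE cs u w) :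
    ∀ ω, cs.IsReduced ω → π ω = w → ∃ χ, χ.Sublist ω ∧ π χ = u := by
  obtain ⟨l, hredl, hπl, l', hsub, hπl'⟩ := h
  have hchain : lec cs u w := by
    rw [← hπl, ← hπl']
    exact subword_chain cs hredl hsub
  exact chain_subword cs hchain

theorem sublist_concat_cases {i : B} :
    ∀ {χ l : List B}, χ.Sublist (l ++ [i]) →
      χ.Sublist l ∨ ∃ χ₂, χ₂.Sublist l ∧ χ = χ₂ ++ [i] := by
  intro χ l
  induction l generalizing χ with
  | nil =>
    intro h
    rcases List.sublist_singleton.mp h with h1 | h1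
    · left; rw [h1]
    · right; exact ⟨[], List.Sublist.refl _, by rw [h1]; rfl⟩
  | cons a l ih =>
    intro h
    cases h with
    | cons _ h3 =>
      rcases ih h3 with h4 | ⟨χ₂, hs, hr⟩
      · left; exact h4.trans (List.sublist_cons_self a l)
      · right; exact ⟨χ₂, hs.trans (List.sublist_cons_self a l), hr⟩
    | cons_cons _ h3 =>
      rcases ih h3 with h4 | ⟨χ₂, hs, hr⟩
      · left; exact h4.cons₂ a
      · right; exact ⟨a :: χ₂, hs.cons₂ a, by rw [hr]; rfl⟩

theorem bruhat_le_up {v' : W} {i : B} (hv : ℓ (v' * s i) = ℓ v' + 1)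
    {a : W} (h : BruhatLE cs a v') : BruhatLE cs a (v' * s i) := by
  obtain ⟨l, hred, hπ, l', hsub, ha⟩ := h
  have hπ2 : π (l ++ [i]) = v' * s i := by
    rw [cs.wordProd_append, hπ]
    simp
  have hll : l.length = ℓ v' := by rw [← hπ]; exact hred.symm
  have hred2 : cs.IsReduced (l ++ [i]) := by
    unfold CoxeterSystem.IsReduced
    rw [hπ2, hv, List.length_append, hll]
    simp
  exact ⟨l ++ [i], hred2, hπ2, l', hsub.trans (List.sublist_append_left l [i]), ha⟩

theorem bruhat_mul_up {v' : W} {i : B} (hv : ℓ (v' * s i) = ℓ v' + 1)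
    {a : W} (h : BruhatLE cs a v') : BruhatLE cs (a * s i) (v' * s i) := by
  obtain ⟨l, hred, hπ, l', hsub, ha⟩ := h
  have hπ2 : π (l ++ [i]) = v' * s i := by
    rw [cs.wordProd_append, hπ]
    simp
  have hll : l.length = ℓ v' := by rw [← hπ]; exact hred.symm
  have hred2 : cs.IsReduced (l ++ [i]) := by
    unfold CoxeterSystem.IsReduced
    rw [hπ2, hv, List.length_append, hll]
    simp
  refine ⟨l ++ [i], hred2, hπ2, l' ++ [i], hsub.append (List.Sublist.refl [i]), ?_⟩
  rw [cs.wordProd_append, ha]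
  simp

theorem bruhat_mul_simple_cases {v' : W} {i : B} (hv : ℓ (v' * s i) = ℓ v' + 1)
    {x : W} (hx : BruhatLE cs x (v' * s i)) :
    BruhatLE cs x v' ∨ ∃ x', BruhatLE cs x' v' ∧ x = x' * s i := by
  obtain ⟨l, hred, hπ⟩ := cs.exists_reduced_word' v'
  have hπ2 : π (l ++ [i]) = v' * s i := by
    rw [cs.wordProd_append, ← hπ]
    simp
  have hll : l.length = ℓ v' := by rw [hπ]; exact hred.symm
  have hred2 : cs.IsReduced (l ++ [i]) := by
    unfold CoxeterSystem.IsReduced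
    rw [hπ2, hv, List.length_append, hll]
    simp
  obtain ⟨χ, hχsub, hχπ⟩ := bruhat_all cs hx (l ++ [i]) hred2 hπ2
  rcases sublist_concat_cases hχsub with h1 | ⟨χ₂, hs, hr⟩
  · left
    exact ⟨l, hred, hπ.symm, χ, h1, hχπ⟩
  · right
    refine ⟨π χ₂, ⟨l, hred, hπ.symm, χ₂, hs, rfl⟩, ?_⟩
    rw [← hχπ, hr, cs.wordProd_append]
    simp

theorem bruhat_simple_mul_cases {w : W} {i : B} (hv : ℓ (s i * w) = ℓ w + 1)
    {b : W} (hb : BruhatLE cs b (s i * w)) :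
    BruhatLE cs b w ∨ ∃ b', BruhatLE cs b' w ∧ b = s i * b' := by
  obtain ⟨l, hred, hπ⟩ := cs.exists_reduced_word' w
  have hπ2 : π (i :: l) = s i * w := by
    rw [cs.wordProd_cons, ← hπ]
  have hll : l.length = ℓ w := by rw [hπ]; exact hred.symm
  have hred2 : cs.IsReduced (i :: l) := by
    unfold CoxeterSystem.IsReduced
    rw [hπ2, hv, List.length_cons, hll]
  obtain ⟨χ, hχsub, hχπ⟩ := bruhat_all cs hb (i :: l) hred2 hπ2
  cases hχsub with
  | cons _ h3 =>
    left
    exact ⟨l, hred, hπ.symm, χ, h3, hχπ⟩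
  | cons_cons _ h3 =>
    right
    rename_i r
    refine ⟨π r, ⟨l, hred, hπ.symm, r, h3, rfl⟩, ?_⟩
    rw [← hχπ, cs.wordProd_cons]

theorem bruhat_le_simple {x : W} {i : B} (hx : BruhatLE cs x (s i)) :
    x = 1 ∨ x = s i := by
  obtain ⟨l, hred, hπ, l', hsub, hx'⟩ := hx
  have hlen : l.length = 1 := by
    have h9 := hred
    unfold CoxeterSystem.IsReduced at h9
    rw [hπ, cs.length_simple] at h9
    exact h9.symm
  obtain ⟨j, rfl⟩ := List.length_eq_one_iff.mp hlen
  have hsj : s j = s i := by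
    have h8 : π [j] = s j := cs.wordProd_singleton j
    rw [← h8, hπ]
  rcases List.sublist_singleton.mp hsub with h1 | h1
  · left
    rw [h1] at hx'
    rw [← hx', cs.wordProd_nil]
  · right
    rw [h1] at hx'
    rw [← hx', cs.wordProd_singleton, hsj]

end BruhatDev

open BruhatDev in
/-- if `v = v′s` with `s` simple and `v′ < v` in Bruhat order, then
`v ∗ w = v′ ∗ (s ∗ w)` for all `w`. -/
theorem statement2 (cs : CoxeterSystem M W) (i : B) (v v' w m₁ m₂ m₃ : W)
    (hv : v = v' * cs.simple i)
    (hlt : BruhatLE cs v' v ∧ v' ≠ v)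
    (h₁ : IsDemazureProd cs v w m₁)
    (h₂ : IsDemazureProd cs (cs.simple i) w m₂)
    (h₃ : IsDemazureProd cs v' m₂ m₃) :
    m₁ = m₃ := by
  obtain ⟨hle, hne⟩ := hlt
  have hlv' : cs.length v' < cs.length v := by
    have h1 := bruhat_length_le cs hle
    rcases Nat.lt_or_ge (cs.length v') (cs.length v) with h | h
    · exact h
    · exact absurd (bruhat_eq_of_length cs hle (by omega)) hne
  have hvlen : cs.length (v' * cs.simple i) = cs.length v' + 1 := by
    rcases cs.length_mul_simple v' i with h | h
    · exact h
    · rw [hv] at hlv'; omega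
  subst hv
  -- facts about m₂
  have h1le : ∀ q, BruhatLE cs q w → BruhatLE cs q m₂ := by
    intro q hq
    have := h₂.2 1 q (bruhat_one cs _) hq
    rwa [one_mul] at this
  have hsle : ∀ q, BruhatLE cs q w → BruhatLE cs (cs.simple i * q) m₂ :=
    fun q hq => h₂.2 _ q (bruhat_refl cs _) hq
  have hwm2 : BruhatLE cs w m₂ := h1le w (bruhat_refl cs w)
  -- m₁ ≤ m₃, regardless of the value of m₂
  have h13 : BruhatLE cs m₁ m₃ := by
    obtain ⟨x, q, hx, hq, hm1⟩ := h₁.1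
    rcases bruhat_mul_simple_cases cs hvlen hx with hxv | ⟨x', hx', hxx⟩
    · rw [hm1]
      exact h₃.2 x q hxv (h1le q hq)
    · rw [hm1, hxx, mul_assoc]
      exact h₃.2 x' (cs.simple i * q) hx' (hsle q hq)
  -- length bound for m₂
  obtain ⟨x2, q2, hx2, hq2, hm2⟩ := h₂.1
  have hlq2 : cs.length q2 ≤ cs.length w := bruhat_length_le cs hq2
  have hm2le : cs.length m₂ ≤ cs.length w + 1 := by
    rcases bruhat_le_simple cs hx2 with h | h
    · rw [hm2, h, one_mul]; omega
    · rw [hm2, h]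
      rcases cs.length_simple_mul q2 i with h9 | h9 <;> omega
  have hwm2len : cs.length w ≤ cs.length m₂ := bruhat_length_le cs hwm2
  rcases cs.length_simple_mul w i with hB | hA
  · -- case `s i * w > w` : here `m₂ = s i * w`
    have hswm2 : BruhatLE cs (cs.simple i * w) m₂ := hsle w (bruhat_refl cs w)
    have h9 : cs.length (cs.simple i * w) ≤ cs.length m₂ := bruhat_length_le cs hswm2
    have hm2sw : m₂ = cs.simple i * w :=
      (bruhat_eq_of_length cs hswm2 (by omega)).symm
    have h31 : BruhatLE cs m₃ m₁ := by
      obtain ⟨a, b2, ha, hb2, hm3⟩ := h₃.1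
      rw [hm2sw] at hb2
      rcases bruhat_simple_mul_cases cs hB hb2 with hbw | ⟨b', hb', hbb⟩
      · rw [hm3]
        exact h₁.2 a b2 (bruhat_le_up cs hvlen ha) hbw
      · rw [hm3, hbb, ← mul_assoc]
        exact h₁.2 (a * cs.simple i) b' (bruhat_mul_up cs hvlen ha) hb'
    exact bruhat_antisymm cs h13 h31
  · -- case `s i * w < w` : here `m₂ = w`
    have hm2w : m₂ = w := by
      rcases bruhat_le_simple cs hx2 with h | h
      · have hq2' : BruhatLE cs m₂ w := by rw [hm2, h, one_mul]; exact hq2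
        exact bruhat_antisymm cs hq2' hwm2
      · by_cases hc : cs.length m₂ = cs.length w
        · exact (bruhat_eq_of_length cs hwm2 hc.symm).symm
        · exfalso
          have hm2eq : cs.length m₂ = cs.length w + 1 := by omega
          have hq2len : cs.length q2 = cs.length w := by
            rw [hm2, h] at hm2eq
            rcases cs.length_simple_mul q2 i with h9 | h9 <;> omega
          have hq2w : q2 = w := bruhat_eq_of_length cs hq2 hq2len
          rw [hm2, h, hq2w] at hm2eq
          omega
    have h31 : BruhatLE cs m₃ m₁ := by
      obtain ⟨a, b2, ha, hb2, hm3⟩ := h₃.1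
      rw [hm2w] at hb2
      rw [hm3]
      exact h₁.2 a b2 (bruhat_le_up cs hvlen ha) hb2
    exact bruhat_antisymm cs h13 h31
end
end

section
/- Let λ be a dominant weight, w an element of the Weyl group W, and define the Demazure weight polytope P = conv_ℚ{xλ : x ≤ w} in the rational weight space. If s is a simple reflection with sw < w in Bruhat order, then s(P) = P. -/
open CoxeterSystem

variable {B W : Type*} [Group W] {M : CoxeterMatrix B}

/-- A realization of a Coxeter group `W` as the Weyl group of a root system `Φ`
in a rational vector space `V`, with positive roots `Φpos`, simple roots `α i`,
coroots, and the `W`-action `ρ`. -/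
structure WeylRootSetup {B W : Type*} [Group W] {M : CoxeterMatrix B}
    (cs : CoxeterSystem M W) (V : Type*) [AddCommGroup V] [Module ℚ V] where
  /-- the action of `W` on the weight space -/
  ρ : W →* (V ≃ₗ[ℚ] V)
  /-- the simple roots -/
  α : B → V
  /-- the coroot attached to a root, as a linear functional on weights -/
  coroot : V → Module.Dual ℚ V
  /-- the set of roots -/
  Φ : Set V
  /-- the set of positive roots -/
  Φpos : Set V
  simple_mem : ∀ i : B, α i ∈ Φpos
  pos_subset : Φpos ⊆ Φ
  neg_mem : ∀ β ∈ Φ, -β ∈ Φ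
  pos_or_neg : ∀ β ∈ Φ, β ∈ Φpos ∨ -β ∈ Φpos
  not_both : ∀ β : V, ¬(β ∈ Φpos ∧ -β ∈ Φpos)
  stable : ∀ u : W, ∀ β ∈ Φ, ρ u β ∈ Φ
  simple_act : ∀ (i : B) (x : V), ρ (cs.simple i) x = x - coroot (α i) x • α i
  coroot_two : ∀ β ∈ Φ, coroot β β = 2
  coroot_equiv : ∀ (u : W) (β x : V), coroot (ρ u β) x = coroot β (ρ u⁻¹ x)

section DemazureAux
open List

namespace Demazure

open scoped Classical in
/-- The basic involution on `W × ℤˣ` attached to a simple reflection. -/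
noncomputable def sigmaFun (cs : CoxeterSystem M W) (i : B) : W × ℤˣ → W × ℤˣ :=
  fun p => (cs.simple i * p.1 * cs.simple i, if p.1 = cs.simple i then -p.2 else p.2)

theorem conj_simple_eq_iff (cs : CoxeterSystem M W) (i : B) (x y : W) :
    cs.simple i * x * cs.simple i = y ↔ x = cs.simple i * y * cs.simple i := by
  constructor
  · rintro rfl
    rw [← mul_assoc, ← mul_assoc, cs.simple_mul_simple_self, one_mul,
      mul_assoc, cs.simple_mul_simple_self, mul_one]
  · rintro rfl
    rw [← mul_assoc, ← mul_assoc, cs.simple_mul_simple_self, one_mul,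
      mul_assoc, cs.simple_mul_simple_self, mul_one]

theorem sigmaFun_involutive (cs : CoxeterSystem M W) (i : B) :
    Function.Involutive (sigmaFun cs i) := by
  intro p
  classical
  have h1 : cs.simple i * (cs.simple i * p.1 * cs.simple i) * cs.simple i = p.1 :=
    (conj_simple_eq_iff cs i _ _).mpr rfl
  have h2 : (cs.simple i * p.1 * cs.simple i = cs.simple i) ↔ p.1 = cs.simple i := by
    rw [conj_simple_eq_iff cs i]
    rw [cs.simple_mul_simple_self, one_mul]
  obtain ⟨w, e⟩ := p
  simp only [sigmaFun] at *
  refine Prod.ext h1 ?_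
  show (if cs.simple i * w * cs.simple i = cs.simple i then _ else _) = e
  rw [h2]
  split_ifs with h <;> simp

/-- The permutation of `W × ℤˣ` attached to a simple reflection. -/
noncomputable def sigma (cs : CoxeterSystem M W) (i : B) : Equiv.Perm (W × ℤˣ) :=
  (sigmaFun_involutive cs i).toPerm

open scoped Classical in
theorem sigma_apply (cs : CoxeterSystem M W) (i : B) (p : W × ℤˣ) :
    sigma cs i p = (cs.simple i * p.1 * cs.simple i,
      if p.1 = cs.simple i then -p.2 else p.2) := rfl

end Demazure

namespace Demazure

variable (cs : CoxeterSystem M W)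

local prefix:100 "ℓ" => cs.length
local prefix:100 "π" => cs.wordProd
local prefix:100 "ris" => cs.rightInvSeq
local prefix:100 "lis" => cs.leftInvSeq
local prefix:100 "s" => cs.simple

theorem ris_cons (i : B) (ω : List B) :
    ris (i :: ω) = ((π ω)⁻¹ * s i * π ω) :: ris ω := rfl

theorem conj_eq_iff (g x y : W) : g * x * g⁻¹ = y ↔ x = g⁻¹ * y * g := by
  constructor
  · rintro rfl; group
  · rintro rfl; group

open scoped Classical in
theorem prod_sigma_apply (ω : List B) (w : W) (e : ℤˣ) :
    ((ω.map (sigma cs)).prod) (w, e) =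
      (π ω * w * (π ω)⁻¹, (-1) ^ (List.count w (ris ω)) * e) := by
  induction ω with
  | nil => simp
  | cons i ω ih =>
    rw [List.map_cons, List.prod_cons, Equiv.Perm.mul_apply, ih, sigma_apply, ris_cons]
    have hcond : (π ω * w * (π ω)⁻¹ = s i) ↔ ((π ω)⁻¹ * s i * π ω = w) := by
      rw [conj_eq_iff]
      constructor
      · rintro rfl; rfl
      · rintro rfl; rfl
    have hcount : List.count w (((π ω)⁻¹ * s i * π ω) :: ris ω)
        = List.count w (ris ω) + if (π ω)⁻¹ * s i * π ω = w then 1 else 0 := by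
      simp [List.count_cons]
    refine Prod.ext ?_ ?_
    · show s i * (π ω * w * (π ω)⁻¹) * s i = π (i :: ω) * w * (π (i :: ω))⁻¹
      rw [cs.wordProd_cons, mul_inv_rev, cs.inv_simple]
      group
    · show (if π ω * w * (π ω)⁻¹ = s i then -((-1) ^ List.count w (ris ω) * e)
          else (-1) ^ List.count w (ris ω) * e) = _
      rw [hcount]
      by_cases h : (π ω)⁻¹ * s i * π ω = w
      · rw [if_pos (hcond.mpr h), if_pos h, pow_add, pow_one]
        rw [mul_neg_one, neg_mul]
      · rw [if_neg (fun hc => h (hcond.mp hc)), if_neg h, add_zero]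

theorem alternatingWord_two_mul_succ (i j : B) (m : ℕ) :
    alternatingWord i j (2 * (m + 1)) = i :: j :: alternatingWord i j (2 * m) := by
  have h1 : 2 * (m + 1) = (2 * m + 1) + 1 := by ring
  rw [h1, alternatingWord_succ', alternatingWord_succ']
  simp [Nat.even_add_one, parity_simps]

theorem prod_map_sigma_alternatingWord (i j : B) (m : ℕ) :
    ((alternatingWord i j (2 * m)).map (sigma cs)).prod = (sigma cs i * sigma cs j) ^ m := by
  induction m with
  | zero => simp [alternatingWord]
  | succ m ih =>
    rw [alternatingWord_two_mul_succ, List.map_cons, List.map_cons, List.prod_cons,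
      List.prod_cons, ih, pow_succ']
    rw [mul_assoc]

theorem alternatingWord_add (i j : B) (n m : ℕ) :
    alternatingWord i j (n + m) =
      (if Even m then alternatingWord i j n else alternatingWord j i n)
        ++ alternatingWord i j m := by
  induction n with
  | zero => by_cases hm : Even m <;> simp [hm, alternatingWord]
  | succ n ih =>
    have h1 : n + 1 + m = (n + m) + 1 := by ring
    rw [h1, alternatingWord_succ', ih]
    by_cases hm : Even m <;> by_cases hn : Even n <;>
      simp [alternatingWord_succ', hm, hn, Nat.even_add, iff_true, iff_false] <;>
      tauto

theorem ris_append (ω₁ ω₂ : List B) :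
    ris (ω₁ ++ ω₂) = (ris ω₁).map (fun x => (π ω₂)⁻¹ * x * π ω₂) ++ ris ω₂ := by
  induction ω₁ with
  | nil => simp
  | cons i ω₁ ih =>
    rw [List.cons_append, ris_cons, ris_cons, ih, List.map_cons, List.cons_append]
    congr 1
    rw [cs.wordProd_append, mul_inv_rev]
    group

theorem ris_alternatingWord_succ (i j : B) (r : ℕ) :
    ris (alternatingWord i j (r + 1)) =
      ((π (alternatingWord i j r))⁻¹ * π (alternatingWord i j (r + 1)))
        :: ris (alternatingWord i j r) := by
  nth_rw 1 [alternatingWord_succ']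
  rw [ris_cons]
  congr 1
  conv_rhs => rw [alternatingWord_succ']
  rw [cs.wordProd_cons]
  group

end Demazure

namespace Demazure

variable (cs : CoxeterSystem M W)

local prefix:100 "ℓ" => cs.length
local prefix:100 "π" => cs.wordProd
local prefix:100 "ris" => cs.rightInvSeq
local prefix:100 "lis" => cs.leftInvSeq
local prefix:100 "s" => cs.simple

theorem conj_pow' (g x : W) (k : ℕ) : (g * x * g⁻¹) ^ k = g * x ^ k * g⁻¹ := by
  induction k with
  | zero => simp
  | succ k ih => rw [pow_succ, pow_succ, ih]; group

theorem comm_of_conj {g x y : W} (h : g * x * g = y) (hg : g * g = 1) : g * x = y * g := by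
  have h2 : g * x = g * x * (g * g) := by rw [hg, mul_one]
  rw [h2, ← mul_assoc, h]

theorem simple_conj_pow (i j : B) (k : ℕ) :
    s i * (s i * s j) ^ k * s i = ((s i * s j) ^ k)⁻¹ := by
  have h : s i * (s i * s j) * (s i)⁻¹ = (s i * s j)⁻¹ := by
    rw [cs.inv_simple, mul_inv_rev, cs.inv_simple, cs.inv_simple, ← mul_assoc,
      cs.simple_mul_simple_self, one_mul]
  calc s i * (s i * s j) ^ k * s i = s i * (s i * s j) ^ k * (s i)⁻¹ := by rw [cs.inv_simple]
    _ = (s i * (s i * s j) * (s i)⁻¹) ^ k := (conj_pow' _ _ _).symm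
    _ = ((s i * s j)⁻¹) ^ k := by rw [h]
    _ = ((s i * s j) ^ k)⁻¹ := by rw [inv_pow]

theorem simple_conj_pow' (i j : B) (k : ℕ) :
    s j * (s i * s j) ^ k * s j = ((s i * s j) ^ k)⁻¹ := by
  have h : s j * (s i * s j) * (s j)⁻¹ = (s i * s j)⁻¹ := by
    rw [cs.inv_simple, mul_inv_rev, cs.inv_simple, cs.inv_simple]
    rw [mul_assoc, cs.simple_mul_simple_cancel_right]
  calc s j * (s i * s j) ^ k * s j = s j * (s i * s j) ^ k * (s j)⁻¹ := by rw [cs.inv_simple]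
    _ = (s j * (s i * s j) * (s j)⁻¹) ^ k := (conj_pow' _ _ _).symm
    _ = ((s i * s j)⁻¹) ^ k := by rw [h]
    _ = ((s i * s j) ^ k)⁻¹ := by rw [inv_pow]

theorem comm_i (i j : B) (k : ℕ) :
    s i * (s i * s j) ^ k = ((s i * s j) ^ k)⁻¹ * s i :=
  comm_of_conj (simple_conj_pow cs i j k) (cs.simple_mul_simple_self i)

theorem comm_j (i j : B) (k : ℕ) :
    s j * (s i * s j) ^ k = ((s i * s j) ^ k)⁻¹ * s j :=
  comm_of_conj (simple_conj_pow' cs i j k) (cs.simple_mul_simple_self j)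

/-- Conjugation by the half braid word sends `s i` to `s i` (`M i j` even) or `s j` (odd). -/
theorem braid_conj_simple_left (i j : B) :
    (π (alternatingWord i j (M i j)))⁻¹ * s i * π (alternatingWord i j (M i j))
      = (if Even (M i j) then s i else s j) := by
  have hp : (s i * s j) ^ (M i j) = 1 := cs.simple_mul_simple_pow i j
  have hz := cs.prod_alternatingWord_eq_mul_pow i j (M i j)
  by_cases hm : Even (M i j)
  · obtain ⟨k, hk⟩ := hm
    have hk2 : M i j / 2 = k := by omega
    rw [if_pos ⟨k, hk⟩] at hz
    rw [hz, if_pos ⟨k, hk⟩, one_mul, hk2]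
    have h2 : (s i * s j) ^ k * (s i * s j) ^ k = 1 := by rw [← pow_add, ← hk, hp]
    rw [mul_assoc, comm_i, ← mul_assoc, ← mul_inv_rev, h2, inv_one, one_mul]
  · obtain ⟨k, hk⟩ := Nat.odd_iff.mpr (Nat.not_even_iff.mp hm)
    have hk2 : M i j / 2 = k := by omega
    rw [if_neg hm] at hz
    rw [hz, if_neg hm, hk2]
    have hfull : (s i * s j) ^ k * (s i * s j) * (s i * s j) ^ k = 1 := by
      rw [← pow_succ, ← pow_add]
      have he : k + 1 + k = M i j := by omega
      rw [he, hp]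
    calc (s j * (s i * s j) ^ k)⁻¹ * s i * (s j * (s i * s j) ^ k)
        = ((s i * s j) ^ k)⁻¹ * (s j * s i * ((s i * s j) ^ k)⁻¹) * s j := by
          rw [mul_inv_rev, cs.inv_simple, comm_j]; simp only [mul_assoc]
      _ = ((s i * s j) ^ k * (s i * s j) * (s i * s j) ^ k)⁻¹ * s j := by
          simp only [mul_inv_rev, cs.inv_simple, mul_assoc]
      _ = s j := by rw [hfull, inv_one, one_mul]

/-- Conjugation by the half braid word sends `s j` to `s j` (`M i j` even) or `s i` (odd). -/
theorem braid_conj_simple_right (i j : B) :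
    (π (alternatingWord i j (M i j)))⁻¹ * s j * π (alternatingWord i j (M i j))
      = (if Even (M i j) then s j else s i) := by
  have hp : (s i * s j) ^ (M i j) = 1 := cs.simple_mul_simple_pow i j
  have hz := cs.prod_alternatingWord_eq_mul_pow i j (M i j)
  by_cases hm : Even (M i j)
  · obtain ⟨k, hk⟩ := hm
    have hk2 : M i j / 2 = k := by omega
    rw [if_pos ⟨k, hk⟩] at hz
    rw [hz, if_pos ⟨k, hk⟩, one_mul, hk2]
    have h2 : (s i * s j) ^ k * (s i * s j) ^ k = 1 := by rw [← pow_add, ← hk, hp]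
    rw [mul_assoc, comm_j, ← mul_assoc, ← mul_inv_rev, h2, inv_one, one_mul]
  · obtain ⟨k, hk⟩ := Nat.odd_iff.mpr (Nat.not_even_iff.mp hm)
    have hk2 : M i j / 2 = k := by omega
    rw [if_neg hm] at hz
    rw [hz, if_neg hm, hk2]
    have h2k : ((s i * s j) ^ (2 * k))⁻¹ = s i * s j := by
      apply inv_eq_of_mul_eq_one_left
      rw [← pow_succ', ← hk]
      exact hp
    calc (s j * (s i * s j) ^ k)⁻¹ * s j * (s j * (s i * s j) ^ k)
        = ((s i * s j) ^ k)⁻¹ * (s j * s j * s j) * (s i * s j) ^ k := by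
          rw [mul_inv_rev, cs.inv_simple]; simp only [mul_assoc]
      _ = ((s i * s j) ^ k)⁻¹ * s j * (s i * s j) ^ k := by
          rw [cs.simple_mul_simple_self, one_mul]
      _ = ((s i * s j) ^ k)⁻¹ * (((s i * s j) ^ k)⁻¹ * s j) := by
          rw [mul_assoc, comm_j]
      _ = ((s i * s j) ^ (2 * k))⁻¹ * s j := by
          rw [← mul_assoc, ← mul_inv_rev, ← pow_add, two_mul]
      _ = s i * (s j * s j) := by rw [h2k]; simp only [mul_assoc]
      _ = s i := by rw [cs.simple_mul_simple_self, mul_one]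


theorem braid_conj_alt_even (i j : B) (hm : Even (M i j)) (r : ℕ) :
    (π (alternatingWord i j (M i j)))⁻¹ * π (alternatingWord i j r)
      * π (alternatingWord i j (M i j)) = π (alternatingWord i j r) := by
  induction r with
  | zero => simp [alternatingWord]
  | succ r ih =>
    rw [alternatingWord_succ', cs.wordProd_cons]
    have hsplit : (π (alternatingWord i j (M i j)))⁻¹
        * (s (if Even r then j else i) * π (alternatingWord i j r))
        * π (alternatingWord i j (M i j))
        = ((π (alternatingWord i j (M i j)))⁻¹ * s (if Even r then j else i)
            * π (alternatingWord i j (M i j)))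
          * ((π (alternatingWord i j (M i j)))⁻¹ * π (alternatingWord i j r)
            * π (alternatingWord i j (M i j))) := by
      group
    rw [hsplit, ih]
    congr 1
    by_cases hr : Even r
    · simp only [if_pos hr]
      rw [braid_conj_simple_right cs i j, if_pos hm]
    · simp only [if_neg hr]
      rw [braid_conj_simple_left cs i j, if_pos hm]

theorem braid_conj_alt_odd (i j : B) (hm : ¬ Even (M i j)) (r : ℕ) :
    (π (alternatingWord i j (M i j)))⁻¹ * π (alternatingWord j i r)
      * π (alternatingWord i j (M i j)) = π (alternatingWord i j r) := by
  induction r with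
  | zero => simp [alternatingWord]
  | succ r ih =>
    rw [alternatingWord_succ' j i, alternatingWord_succ' i j, cs.wordProd_cons, cs.wordProd_cons]
    have hsplit : (π (alternatingWord i j (M i j)))⁻¹
        * (s (if Even r then i else j) * π (alternatingWord j i r))
        * π (alternatingWord i j (M i j))
        = ((π (alternatingWord i j (M i j)))⁻¹ * s (if Even r then i else j)
            * π (alternatingWord i j (M i j)))
          * ((π (alternatingWord i j (M i j)))⁻¹ * π (alternatingWord j i r)
            * π (alternatingWord i j (M i j))) := by
      group
    rw [hsplit, ih]
    congr 1
    by_cases hr : Even r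
    · simp only [if_pos hr]
      rw [braid_conj_simple_left cs i j, if_neg hm]
    · simp only [if_neg hr]
      rw [braid_conj_simple_right cs i j, if_neg hm]

theorem map_conj_ris_even (i j : B) (hm : Even (M i j)) (r : ℕ) :
    (ris (alternatingWord i j r)).map
        (fun x => (π (alternatingWord i j (M i j)))⁻¹ * x * π (alternatingWord i j (M i j)))
      = ris (alternatingWord i j r) := by
  induction r with
  | zero => simp [alternatingWord]
  | succ r ih =>
    rw [ris_alternatingWord_succ, List.map_cons, ih]
    congr 1
    have h1 := braid_conj_alt_even cs i j hm r
    have h2 := braid_conj_alt_even cs i j hm (r + 1)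
    calc (π (alternatingWord i j (M i j)))⁻¹
          * ((π (alternatingWord i j r))⁻¹ * π (alternatingWord i j (r + 1)))
          * π (alternatingWord i j (M i j))
        = ((π (alternatingWord i j (M i j)))⁻¹ * π (alternatingWord i j r)
            * π (alternatingWord i j (M i j)))⁻¹
          * ((π (alternatingWord i j (M i j)))⁻¹ * π (alternatingWord i j (r + 1))
            * π (alternatingWord i j (M i j))) := by
          simp only [mul_inv_rev, inv_inv]; group
      _ = (π (alternatingWord i j r))⁻¹ * π (alternatingWord i j (r + 1)) := by rw [h1, h2]

theorem map_conj_ris_odd (i j : B) (hm : ¬ Even (M i j)) (r : ℕ) :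
    (ris (alternatingWord j i r)).map
        (fun x => (π (alternatingWord i j (M i j)))⁻¹ * x * π (alternatingWord i j (M i j)))
      = ris (alternatingWord i j r) := by
  induction r with
  | zero => simp [alternatingWord]
  | succ r ih =>
    rw [ris_alternatingWord_succ, ris_alternatingWord_succ, List.map_cons, ih]
    congr 1
    have h1 := braid_conj_alt_odd cs i j hm r
    have h2 := braid_conj_alt_odd cs i j hm (r + 1)
    calc (π (alternatingWord i j (M i j)))⁻¹
          * ((π (alternatingWord j i r))⁻¹ * π (alternatingWord j i (r + 1)))
          * π (alternatingWord i j (M i j))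
        = ((π (alternatingWord i j (M i j)))⁻¹ * π (alternatingWord j i r)
            * π (alternatingWord i j (M i j)))⁻¹
          * ((π (alternatingWord i j (M i j)))⁻¹ * π (alternatingWord j i (r + 1))
            * π (alternatingWord i j (M i j))) := by
          simp only [mul_inv_rev, inv_inv]; group
      _ = (π (alternatingWord i j r))⁻¹ * π (alternatingWord i j (r + 1)) := by rw [h1, h2]

open scoped Classical in
theorem count_ris_braid_even (i j : B) (w : W) :
    Even (List.count w (ris (alternatingWord i j (2 * M i j)))) := by
  have hsplit := alternatingWord_add i j (M i j) (M i j)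
  rw [← two_mul] at hsplit
  rw [hsplit]
  by_cases hm : Even (M i j)
  · rw [if_pos hm, ris_append, List.count_append, map_conj_ris_even cs i j hm]
    exact ⟨_, rfl⟩
  · rw [if_neg hm, ris_append, List.count_append, map_conj_ris_odd cs i j hm]
    exact ⟨_, rfl⟩

theorem sigma_liftable : M.IsLiftable (sigma cs) := by
  intro i j
  rw [← prod_map_sigma_alternatingWord cs i j (M i j)]
  have hpi : π (alternatingWord i j (2 * M i j)) = 1 := by
    have h := cs.prod_alternatingWord_eq_mul_pow i j (2 * M i j)
    have h2 : 2 * M i j / 2 = M i j := by omega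
    rw [if_pos ⟨M i j, by ring⟩, one_mul, h2] at h
    rw [h, cs.simple_mul_simple_pow]
  apply Equiv.ext
  rintro ⟨w, e⟩
  rw [prod_sigma_apply, hpi]
  have hc := count_ris_braid_even cs i j w
  rw [Even.neg_one_pow hc]
  simp

/-- The sign representation of `W` on `W × ℤˣ`. -/
noncomputable def sigmaHom : W →* Equiv.Perm (W × ℤˣ) :=
  cs.lift ⟨sigma cs, sigma_liftable cs⟩

theorem sigmaHom_wordProd (ω : List B) :
    sigmaHom cs (π ω) = (ω.map (sigma cs)).prod := by
  show sigmaHom cs (List.prod (ω.map cs.simple)) = _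
  rw [map_list_prod, List.map_map]
  congr 1
  apply List.map_congr_left
  intro i _
  exact cs.lift_apply_simple (sigma_liftable cs) i

open scoped Classical in
theorem count_parity_eq {ω₁ ω₂ : List B} (h : π ω₁ = π ω₂) (w : W) :
    ((-1 : ℤˣ)) ^ (List.count w (ris ω₁)) = (-1) ^ (List.count w (ris ω₂)) := by
  have h1 := prod_sigma_apply cs ω₁ w 1
  have h2 := prod_sigma_apply cs ω₂ w 1
  rw [← sigmaHom_wordProd] at h1 h2
  rw [h] at h1
  have h3 := h1.symm.trans h2
  have h4 := congrArg Prod.snd h3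
  simpa using h4

theorem pal_prod (r : List B) (c : B) :
    π (r ++ [c] ++ r.reverse) = π r * s c * (π r)⁻¹ := by
  rw [cs.wordProd_append, cs.wordProd_append, cs.wordProd_reverse, cs.wordProd_singleton]


open scoped Classical in
theorem count_pal_odd (r : List B) (c : B) :
    Odd (List.count (π r * s c * (π r)⁻¹) (ris (r ++ [c] ++ r.reverse))) := by
  induction r with
  | nil =>
    simp only [List.nil_append, List.reverse_nil, List.append_nil, cs.wordProd_nil,
      one_mul, inv_one, mul_one]
    have : ris [c] = [s c] := by
      rw [ris_cons]
      simp
    rw [this]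
    simp [List.count_singleton']
  | cons a r ih =>
    have hlist : ((a :: r) ++ [c] ++ (a :: r).reverse)
        = a :: ((r ++ [c] ++ r.reverse) ++ [a]) := by simp
    set ρ := r ++ [c] ++ r.reverse with hρdef
    set t' := π r * s c * (π r)⁻¹ with ht'def
    have hπρ : π ρ = t' := pal_prod cs r c
    have ht : π (a :: r) * s c * (π (a :: r))⁻¹ = s a * t' * s a := by
      rw [cs.wordProd_cons, mul_inv_rev, cs.inv_simple, ht'def]
      group
    rw [hlist, ht]
    have hris1 : ris (a :: (ρ ++ [a])) = ((π (ρ ++ [a]))⁻¹ * s a * π (ρ ++ [a])) :: ris (ρ ++ [a]) :=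
      ris_cons cs a _
    have hris2 : ris (ρ ++ [a]) = (ris ρ).map (fun x => (π [a])⁻¹ * x * π [a]) ++ ris [a] :=
      ris_append cs ρ [a]
    have hrisa : ris [a] = [s a] := by rw [ris_cons]; simp
    have hπρa : π (ρ ++ [a]) = t' * s a := by rw [cs.wordProd_append, hπρ, cs.wordProd_singleton]
    rw [hris1, hris2, hrisa, hπρa]
    have ht'inv : t'⁻¹ = t' := by
      rw [ht'def]
      simp [mul_inv_rev, cs.inv_simple, mul_assoc]
    -- the head
    have hhead : (t' * s a)⁻¹ * s a * (t' * s a) = s a * t' * (s a * t' * s a) := by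
      simp only [mul_inv_rev, cs.inv_simple, ht'inv, mul_assoc]
    -- count in the mapped list
    have hmapcount : List.count (s a * t' * s a)
        ((ris ρ).map (fun x => (π [a])⁻¹ * x * π [a])) = List.count t' (ris ρ) := by
      have hinj : Function.Injective (fun x : W => (π [a])⁻¹ * x * π [a]) := by
        intro x y hxy
        simpa using mul_left_cancel (mul_right_cancel hxy)
      have := List.count_map_of_injective (ris ρ) _ hinj t'
      rw [← this]
      congr 1
      rw [cs.wordProd_singleton, cs.inv_simple]
    -- the two indicator conditions agree
    have hcond1 : (s a * t' * (s a * t' * s a) = s a * t' * s a) ↔ t' = s a := by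
      constructor
      · intro h
        have h' : s a * (t' * (s a * (t' * s a))) = s a * (t' * s a) := by
          simpa only [mul_assoc] using h
        have h2 := mul_left_cancel h'
        have h3 := mul_left_cancel h2
        have h4 : t' * s a = 1 := mul_left_cancel (h3.trans (mul_one (s a)).symm)
        have h5 : t' = (s a)⁻¹ := mul_eq_one_iff_eq_inv.mp h4
        rw [h5, cs.inv_simple]
      · intro h
        rw [h]
        simp [cs.simple_mul_simple_self, mul_assoc]
    have hcond2 : (s a = s a * t' * s a) ↔ t' = s a := by
      constructor
      · intro h
        have h' : s a * 1 = s a * (t' * s a) := by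
          rw [mul_one]
          simpa only [mul_assoc] using h
        have h2 := mul_left_cancel h'
        have h5 : t' = (s a)⁻¹ := mul_eq_one_iff_eq_inv.mp h2.symm
        rw [h5, cs.inv_simple]
      · intro h
        rw [h]
        simp [cs.simple_mul_simple_self, mul_assoc]
    rw [List.count_cons, List.count_append, hmapcount, hhead]
    rw [List.count_singleton']
    obtain ⟨k, hk⟩ := ih
    by_cases hc : t' = s a
    · rw [if_pos (by simpa using hcond1.mpr hc), if_pos (by simpa using hcond2.mpr hc), hk]
      exact ⟨k + 1, by ring⟩
    · rw [if_neg (by simpa using fun h => hc (hcond1.mp h)),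
        if_neg (by simpa using fun h => hc (hcond2.mp h)), hk]
      exact ⟨k, by ring⟩

open scoped Classical in
theorem strong_exchange_right {w t : W} (ht : cs.IsReflection t) {ω : List B}
    (hω : π ω = w) (hlt : ℓ (w * t) < ℓ w) : t ∈ ris ω := by
  obtain ⟨x, c, htx⟩ := id ht
  obtain ⟨r, hr⟩ := cs.wordProd_surjective x
  have hρ : π (r ++ [c] ++ r.reverse) = t := by rw [pal_prod, hr, ← htx]
  obtain ⟨τ, hτred, hτ⟩ := cs.exists_reduced_word' (w * t)
  have hτ0 : List.count t (ris τ) = 0 := by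
    apply List.count_eq_zero_of_not_mem
    intro hmem
    have hinv := cs.isRightInversion_of_mem_rightInvSeq hτred hmem
    have h2 := hinv.2
    rw [← hτ, mul_assoc, ht.mul_self, mul_one] at h2
    omega
  have hcount : Odd (List.count t (ris (τ ++ (r ++ [c] ++ r.reverse)))) := by
    rw [ris_append, List.count_append]
    have hmap : List.count t ((ris τ).map
        (fun y => (π (r ++ [c] ++ r.reverse))⁻¹ * y * π (r ++ [c] ++ r.reverse))) = 0 := by
      have hinj : Function.Injective
          (fun y : W => (π (r ++ [c] ++ r.reverse))⁻¹ * y * π (r ++ [c] ++ r.reverse)) := by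
        intro y1 y2 hxy
        simpa using mul_left_cancel (mul_right_cancel hxy)
      have hfix : (π (r ++ [c] ++ r.reverse))⁻¹ * t * π (r ++ [c] ++ r.reverse) = t := by
        rw [hρ]
        simp
      have := List.count_map_of_injective (ris τ) _ hinj t
      simp only [hfix] at this
      rw [this, hτ0]
    rw [hmap, zero_add]
    have := count_pal_odd cs r c
    rwa [hr, ← htx] at this
  have hπ2 : π (τ ++ (r ++ [c] ++ r.reverse)) = w := by
    rw [cs.wordProd_append, ← hτ, hρ, mul_assoc, ht.mul_self, mul_one]
  have hpar := count_parity_eq cs (ω₁ := ω) (ω₂ := τ ++ (r ++ [c] ++ r.reverse))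
    (by rw [hω, hπ2]) t
  by_contra hmem
  rw [List.count_eq_zero_of_not_mem hmem, pow_zero, Odd.neg_one_pow hcount] at hpar
  exact absurd hpar (by decide)

theorem strong_exchange_left {w t : W} (ht : cs.IsReflection t) {ω : List B}
    (hω : π ω = w) (hlt : ℓ (t * w) < ℓ w) : t ∈ lis ω := by
  have h1 : π ω.reverse = w⁻¹ := by rw [cs.wordProd_reverse, hω]
  have h2 : ℓ (w⁻¹ * t) < ℓ w⁻¹ := by
    have : w⁻¹ * t = (t * w)⁻¹ := by rw [mul_inv_rev, ht.inv]
    rw [this, cs.length_inv, cs.length_inv]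
    exact hlt
  have := strong_exchange_right cs ht h1 h2
  rw [cs.rightInvSeq_reverse, List.mem_reverse] at this
  exact this

theorem exists_eraseIdx_of_mem_ris {ω : List B} {t : W} (h : t ∈ ris ω) :
    ∃ j, j < ω.length ∧ π ω * t = π (ω.eraseIdx j) := by
  obtain ⟨j, hj, hget⟩ := List.mem_iff_getElem.mp h
  refine ⟨j, by simpa using hj, ?_⟩
  rw [← hget, ← List.getD_eq_getElem _ 1 hj, cs.wordProd_mul_getD_rightInvSeq]

theorem exists_eraseIdx_of_mem_lis {ω : List B} {t : W} (h : t ∈ lis ω) :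
    ∃ j, j < ω.length ∧ t * π ω = π (ω.eraseIdx j) := by
  obtain ⟨j, hj, hget⟩ := List.mem_iff_getElem.mp h
  refine ⟨j, by simpa using hj, ?_⟩
  rw [← hget, ← List.getD_eq_getElem _ 1 hj, cs.getD_leftInvSeq_mul_wordProd]


/-- One step in the Bruhat chain order: multiply by a reflection on the right, length goes up. -/
def ChainStep (u w : W) : Prop := ∃ t, cs.IsReflection t ∧ w = u * t ∧ ℓ u < ℓ w

/-- The Bruhat chain order. -/
def ChainLE : W → W → Prop := Relation.ReflTransGen (ChainStep cs)

/-- Deletion property: every word has a reduced sublist with the same product. -/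
theorem exists_reduced_sublist (ω : List B) :
    ∃ τ, τ.Sublist ω ∧ cs.IsReduced τ ∧ π τ = π ω := by
  induction ω using List.reverseRecOn with
  | nil => exact ⟨[], by simp, by simp [CoxeterSystem.IsReduced], rfl⟩
  | append_singleton ω c ih =>
    obtain ⟨τ, hsub, hred, hπ⟩ := ih
    rcases cs.length_mul_simple (π τ) c with h | h
    · refine ⟨τ ++ [c], hsub.append (List.Sublist.refl _), ?_, ?_⟩
      · show ℓ (π (τ ++ [c])) = (τ ++ [c]).length
        rw [cs.wordProd_append, cs.wordProd_singleton, h, List.length_append]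
        have h2 : ℓ (π τ) = τ.length := hred
        simp only [List.length_singleton]
        omega
      · rw [cs.wordProd_append, cs.wordProd_append, cs.wordProd_singleton, hπ]
    · have hlt : ℓ (π τ * s c) < ℓ (π τ) := by omega
      have hmem : s c ∈ ris τ :=
        strong_exchange_right cs (cs.isReflection_simple c) rfl hlt
      obtain ⟨j, hj, heq⟩ := exists_eraseIdx_of_mem_ris cs hmem
      refine ⟨τ.eraseIdx j, ?_, ?_, ?_⟩
      · exact ((τ.eraseIdx_sublist j).trans hsub).trans (List.sublist_append_left ω [c])
      · show ℓ (π (τ.eraseIdx j)) = (τ.eraseIdx j).length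
        have hL : (τ.eraseIdx j).length + 1 = τ.length := List.length_eraseIdx_add_one hj
        have hred' : ℓ (π τ) = τ.length := hred
        rw [← heq]
        omega
      · rw [← heq, cs.wordProd_append, cs.wordProd_singleton, hπ]

/-- Chain order implies the subword property for every reduced word. -/
theorem chainLE_subword' : ∀ n : ℕ, ∀ {u w : W}, ℓ w ≤ n → ChainLE cs u w →
    ∀ ω : List B, cs.IsReduced ω → π ω = w → ∃ σ, σ.Sublist ω ∧ π σ = u := by
  intro n
  induction n with
  | zero =>
    intro u w hw hle ω hred hπ
    rcases Relation.ReflTransGen.cases_tail hle with rfl | ⟨x, _, ⟨t, _, _, hlen⟩⟩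
    · exact ⟨ω, List.Sublist.refl _, hπ⟩
    · omega
  | succ n ih =>
    intro u w hw hle ω hred hπ
    rcases Relation.ReflTransGen.cases_tail hle with rfl | ⟨x, hux, ⟨t, ht, hweq, hlen⟩⟩
    · exact ⟨ω, List.Sublist.refl _, hπ⟩
    · have hx : x = w * t := by rw [hweq, mul_assoc, ht.mul_self, mul_one]
      have hlt : ℓ (w * t) < ℓ w := by rw [← hx]; exact hlen
      have hmem := strong_exchange_right cs ht hπ hlt
      obtain ⟨j, hj, heq⟩ := exists_eraseIdx_of_mem_ris cs hmem
      obtain ⟨τ, hτsub, hτred, hτπ⟩ := exists_reduced_sublist cs (ω.eraseIdx j)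
      have hτx : π τ = x := by rw [hτπ, ← heq, hπ, ← hx]
      have hxle : ℓ x ≤ n := by omega
      obtain ⟨σ, hσ, hσπ⟩ := ih hxle hux τ hτred hτx
      exact ⟨σ, (hσ.trans hτsub).trans (ω.eraseIdx_sublist j), hσπ⟩

theorem chainLE_subword {u w : W} (h : ChainLE cs u w) {ω : List B}
    (hred : cs.IsReduced ω) (hπ : π ω = w) : ∃ σ, σ.Sublist ω ∧ π σ = u :=
  chainLE_subword' cs (ℓ w) le_rfl h ω hred hπ

theorem chainLE_one {u : W} (h : ChainLE cs u 1) : u = 1 := by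
  rcases Relation.ReflTransGen.cases_tail h with rfl | ⟨x, _, ⟨t, _, _, hlen⟩⟩
  · rfl
  · simp at hlen

/-- The grand mutual induction: subword ⇒ chain, lifting property, and
    right-descent stability of lower Bruhat intervals. -/
theorem grand (n : ℕ) :
    (∀ ω : List B, ω.length ≤ n → cs.IsReduced ω →
        ∀ σ, σ.Sublist ω → ChainLE cs (π σ) (π ω)) ∧
    (∀ w : W, ℓ w ≤ n → ∀ u, ChainLE cs u w → ∀ c : B, ℓ w < ℓ (w * s c) →
        ChainLE cs (u * s c) (w * s c)) ∧
    (∀ w : W, ℓ w ≤ n → ∀ u, ChainLE cs u w → ∀ c : B, ℓ (w * s c) < ℓ w →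
        ChainLE cs (u * s c) w) := by
  induction n with
  | zero =>
    refine ⟨?_, ?_, ?_⟩
    · intro ω hlen hred σ hσ
      have hω : ω = [] := List.eq_nil_of_length_eq_zero (by omega)
      subst hω
      have hσ' : σ = [] := List.sublist_nil.mp hσ
      subst hσ'
      exact Relation.ReflTransGen.refl
    · intro w hw u hu c hup
      have hw1 : w = 1 := cs.length_eq_zero_iff.mp (by omega)
      subst hw1
      have := chainLE_one cs hu
      subst this
      exact Relation.ReflTransGen.refl
    · intro w hw u hu c hdn
      omega
  | succ n ih =>
    obtain ⟨ihS, ihL, ihF⟩ := ih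
    have hSub : ∀ ω : List B, ω.length ≤ n + 1 → cs.IsReduced ω →
        ∀ σ, σ.Sublist ω → ChainLE cs (π σ) (π ω) := by
      intro ω hlen hred σ hσ
      rcases List.eq_nil_or_concat ω with rfl | ⟨ω₀, c, rfl⟩
      · have hσ' : σ = [] := List.sublist_nil.mp hσ
        subst hσ'
        exact Relation.ReflTransGen.refl
      · have hred₀ : cs.IsReduced ω₀ := by
          have := CoxeterSystem.IsReduced.take hred ω₀.length
          simpa [List.concat_eq_append, List.take_left] using this
        have hlen₀ : ω₀.length ≤ n := by
          simp only [List.concat_eq_append, List.length_append] at hlen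
          simpa using hlen
        have hasc : ℓ (π ω₀) < ℓ (π ω₀ * s c) := by
          have h1 : ℓ (π (ω₀ ++ [c])) = ω₀.length + 1 := by
            have := hred
            simp only [List.concat_eq_append] at this
            simpa [CoxeterSystem.IsReduced] using this
          have h2 : ℓ (π ω₀) = ω₀.length := hred₀
          rw [cs.wordProd_append, cs.wordProd_singleton] at h1
          omega
        rw [List.concat_eq_append] at hσ
        obtain ⟨σ₁, σ₂, rfl, h₁, h₂⟩ := List.sublist_append_iff.mp hσ
        rcases List.sublist_singleton.mp h₂ with rfl | rfl
        · have hc := ihS ω₀ hlen₀ hred₀ σ₁ h₁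
          have hstep : ChainStep cs (π ω₀) (π (ω₀.concat c)) := by
            refine ⟨s c, cs.isReflection_simple c, ?_, ?_⟩
            · rw [List.concat_eq_append, cs.wordProd_append, cs.wordProd_singleton]
            · rw [List.concat_eq_append, cs.wordProd_append, cs.wordProd_singleton]
              exact hasc
          simpa [List.concat_eq_append, ChainLE] using
            (Relation.ReflTransGen.tail hc hstep :
              ChainLE cs (π σ₁) (π (ω₀.concat c)))
        · have hc := ihS ω₀ hlen₀ hred₀ σ₁ h₁
          have hL0 : ℓ (π ω₀) ≤ n := by
            have : ℓ (π ω₀) = ω₀.length := hred₀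
            omega
          have hlift := ihL (π ω₀) hL0 (π σ₁) hc c hasc
          have e1 : π (σ₁ ++ [c]) = π σ₁ * s c := by
            rw [cs.wordProd_append, cs.wordProd_singleton]
          have e2 : π (ω₀.concat c) = π ω₀ * s c := by
            rw [List.concat_eq_append, cs.wordProd_append, cs.wordProd_singleton]
          rw [e1, e2]
          exact hlift
    refine ⟨hSub, ?_, ?_⟩
    · -- lifting
      intro w hw u hu c hup
      rcases Relation.ReflTransGen.cases_tail hu with rfl | ⟨x, hux, ⟨t, ht, hweq, hlen⟩⟩
      · exact Relation.ReflTransGen.refl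
      · have hxle : ℓ x ≤ n := by omega
        rcases cs.length_mul_simple x c with hxc | hxc
        · -- ascent at x
          have h1 := ihL x hxle u hux c (by omega)
          have hstep : ChainStep cs (x * s c) (w * s c) := by
            refine ⟨(s c)⁻¹ * t * s c, ?_, ?_, ?_⟩
            · have := ht.conj ((s c)⁻¹)
              simpa [inv_inv] using this
            · rw [hweq]
              group
            · calc ℓ (x * s c) = ℓ x + 1 := hxc
                _ ≤ ℓ w := by omega
                _ < ℓ (w * s c) := hup
          exact Relation.ReflTransGen.tail h1 hstep
        · -- descent at x
          have hdn : ℓ (x * s c) < ℓ x := by omega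
          have h1 := ihF x hxle u hux c hdn
          have h2 : ChainLE cs x w := Relation.ReflTransGen.single ⟨t, ht, hweq, hlen⟩
          have h3 : ChainStep cs w (w * s c) := ⟨s c, cs.isReflection_simple c, rfl, hup⟩
          exact Relation.ReflTransGen.tail (Relation.ReflTransGen.trans h1 h2) h3
    · -- right-descent stability
      intro w hw u hu c hdn
      obtain ⟨τ, hτred, hτπ⟩ := cs.exists_reduced_word' (w * s c)
      have hτlen : τ.length = ℓ (w * s c) := by
        have h1 : ℓ (π τ) = τ.length := hτred
        rw [← hτπ] at h1
        omega
      have hΩπ : π (τ ++ [c]) = w := by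
        rw [cs.wordProd_append, cs.wordProd_singleton, ← hτπ,
          cs.simple_mul_simple_cancel_right]
      have hΩred : cs.IsReduced (τ ++ [c]) := by
        show ℓ (π (τ ++ [c])) = (τ ++ [c]).length
        have h2 := cs.length_mul_simple w c
        rw [hΩπ]
        simp only [List.length_append, List.length_singleton]
        omega
      obtain ⟨σ, hσsub, hσπ⟩ := chainLE_subword cs hu hΩred hΩπ
      obtain ⟨σ₁, σ₂, rfl, h₁, h₂⟩ := List.sublist_append_iff.mp hσsub
      have hτlen_le : τ.length ≤ n := by omega
      have hwsc_le : ℓ (w * s c) ≤ n := by omega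
      have hchain : ChainLE cs (π σ₁) (π τ) := ihS τ hτlen_le hτred σ₁ h₁
      rcases List.sublist_singleton.mp h₂ with rfl | rfl
      · have hu' : ChainLE cs u (w * s c) := by
          have he : π σ₁ = u := by simpa using hσπ
          rw [← hτπ] at hchain
          rwa [he] at hchain
        have hup : ℓ (w * s c) < ℓ (w * s c * s c) := by
          rw [cs.simple_mul_simple_cancel_right]
          exact hdn
        have := ihL (w * s c) hwsc_le u hu' c hup
        rwa [cs.simple_mul_simple_cancel_right] at this
      · have husc : u * s c = π σ₁ := by
          rw [← hσπ, cs.wordProd_append, cs.wordProd_singleton,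
            cs.simple_mul_simple_cancel_right]
        have hstep : ChainStep cs (w * s c) w :=
          ⟨s c, cs.isReflection_simple c, (cs.simple_mul_simple_cancel_right c).symm, hdn⟩
        rw [husc, ← hτπ] at *
        exact Relation.ReflTransGen.tail hchain hstep


/-- Left version of the Bruhat lifting property for the subword order `BruhatLE`. -/
theorem bruhat_mul_simple_left {u w : W} {i : B} (hlt : ℓ (s i * w) < ℓ w)
    (h : BruhatLE cs u w) : BruhatLE cs (s i * u) w := by
  obtain ⟨l, hlred, hlπ, l', hsub, hl'π⟩ := h
  have hrev_red : cs.IsReduced l.reverse := (cs.isReduced_reverse_iff l).mpr hlred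
  have h1 : ChainLE cs u⁻¹ w⁻¹ := by
    have := (grand cs l.reverse.length).1 l.reverse le_rfl hrev_red l'.reverse hsub.reverse
    rw [cs.wordProd_reverse, cs.wordProd_reverse, hlπ, hl'π] at this
    exact this
  have h2 : ℓ (w⁻¹ * s i) < ℓ w⁻¹ := by
    have he : w⁻¹ * s i = (s i * w)⁻¹ := by rw [mul_inv_rev, cs.inv_simple]
    rw [he, cs.length_inv, cs.length_inv]
    exact hlt
  have h3 : ChainLE cs (u⁻¹ * s i) w⁻¹ := (grand cs (ℓ w⁻¹)).2.2 w⁻¹ le_rfl u⁻¹ h1 i h2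
  obtain ⟨Λ, hΛred, hΛπ⟩ := cs.exists_reduced_word' w⁻¹
  obtain ⟨σ, hσsub, hσπ⟩ := chainLE_subword cs h3 hΛred hΛπ.symm
  refine ⟨Λ.reverse, (cs.isReduced_reverse_iff Λ).mpr hΛred, ?_, σ.reverse, hσsub.reverse, ?_⟩
  · rw [cs.wordProd_reverse, ← hΛπ, inv_inv]
  · rw [cs.wordProd_reverse, hσπ, mul_inv_rev, cs.inv_simple, inv_inv]

end Demazure


end DemazureAux

open Demazure

/-- the Demazure weight polytope `P = conv_ℚ{xλ : x ≤ w}` is stable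
under a simple reflection `s` with `sw < w`. -/
theorem statement6 {V : Type*} [AddCommGroup V] [Module ℚ V]
    (cs : CoxeterSystem M W) (S : WeylRootSetup cs V)
    (lam : V) (hdom : ∀ β ∈ S.Φpos, 0 ≤ S.coroot β lam)
    (w : W) (i : B) (h : cs.length (cs.simple i * w) + 1 = cs.length w) :
    ⇑(S.ρ (cs.simple i)) ''
        (convexHull ℚ {x : V | ∃ u : W, BruhatLE cs u w ∧ x = S.ρ u lam})
      = convexHull ℚ {x : V | ∃ u : W, BruhatLE cs u w ∧ x = S.ρ u lam} := by
  have hlt : cs.length (cs.simple i * w) < cs.length w := by omega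
  have key : ∀ u : W, BruhatLE cs u w → BruhatLE cs (cs.simple i * u) w :=
    fun u hu => bruhat_mul_simple_left cs hlt hu
  set G : Set V := {x : V | ∃ u : W, BruhatLE cs u w ∧ x = S.ρ u lam} with hG
  have himg : ⇑(S.ρ (cs.simple i)) '' G = G := by
    apply Set.Subset.antisymm
    · rintro x ⟨y, ⟨u, hu, rfl⟩, rfl⟩
      refine ⟨cs.simple i * u, key u hu, ?_⟩
      rw [map_mul]
      rfl
    · rintro x ⟨u, hu, rfl⟩
      refine ⟨S.ρ (cs.simple i * u) lam, ⟨cs.simple i * u, key u hu, rfl⟩, ?_⟩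
      have : cs.simple i * (cs.simple i * u) = u := cs.simple_mul_simple_cancel_left i
      calc (S.ρ (cs.simple i)) ((S.ρ (cs.simple i * u)) lam)
          = (S.ρ (cs.simple i) * S.ρ (cs.simple i * u)) lam := rfl
        _ = (S.ρ (cs.simple i * (cs.simple i * u))) lam := by rw [← map_mul]
        _ = (S.ρ u) lam := by rw [this]
  calc ⇑(S.ρ (cs.simple i)) '' (convexHull ℚ G)
      = ⇑((S.ρ (cs.simple i)).toLinearMap) '' (convexHull ℚ G) := rfl
    _ = convexHull ℚ (⇑((S.ρ (cs.simple i)).toLinearMap) '' G) :=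
        LinearMap.image_convexHull _ _
    _ = convexHull ℚ (⇑(S.ρ (cs.simple i)) '' G) := rfl
    _ = convexHull ℚ G := by rw [himg]
end
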